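/- arXiv:2410.10882 — 8 statements merged into one kernel-verified Lean document; each statement's English description precedes it below -/
import Mathlib

section
/- Let p be an odd prime, ε a quadratic nonresidue mod p, u ≥ 0, and m an integer with p ∤ m. For k < u, the congruence −ε x² + p^{2u+1} y² − ε p^{2u+1} z² ≡ m·p^{2k+1} (mod p^t) has no solutions for t large; i.e., the local density d_{−εx²+p^{2u+1}y²−εp^{2u+1}z², p}(m·p^{2k+1}) = 0. -/
private lemma aux_pow_dvd_of_sq_dvd (p n k : ℕ) (hp : p.Prime)
    (h : p ^ (2 * k + 1) ∣ n ^ 2) : p ^ (k + 1) ∣ n := by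
  rcases eq_or_ne n 0 with rfl | hn
  · simp
  have h1 := (Nat.Prime.pow_dvd_iff_le_factorization hp (pow_ne_zero 2 hn)).mp h
  rw [Nat.factorization_pow, Finsupp.smul_apply, smul_eq_mul] at h1
  exact (Nat.Prime.pow_dvd_iff_le_factorization hp hn).mpr (by omega)

/-- Let `p` be an odd prime, `ε` a quadratic nonresidue mod `p`, `u, k ≥ 0` with `k < u`,
and `m` an integer with `p ∤ m`. Then the local density of
`−ε x² + p^(2u+1) y² − ε p^(2u+1) z²` at `m·p^(2k+1)` is `0`. -/
theorem localDensity_anisotropic_low_odd_valuation (p : ℕ) [Fact p.Prime] (hp2 : p ≠ 2)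
    (ε : ℤ) (hε : legendreSym p ε = -1) (u k : ℕ) (hk : k < u)
    (m : ℤ) (hm : ¬ (p : ℤ) ∣ m) :
    ∃ T : ℕ, ∀ t ≥ T,
      (Nat.card {v : ZMod (p ^ t) × ZMod (p ^ t) × ZMod (p ^ t) //
          -(ε : ZMod (p ^ t)) * v.1 ^ 2 + (p : ZMod (p ^ t)) ^ (2 * u + 1) * v.2.1 ^ 2
            - (ε : ZMod (p ^ t)) * (p : ZMod (p ^ t)) ^ (2 * u + 1) * v.2.2 ^ 2
            = (m : ZMod (p ^ t)) * (p : ZMod (p ^ t)) ^ (2 * k + 1)} : ℚ)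
          / (p : ℚ) ^ (2 * t)
        = 0 := by
  have hp := (Fact.out : p.Prime)
  have hpe : ¬ (p : ℤ) ∣ ε := by
    intro h
    have h0 : (ε : ZMod p) = 0 := (ZMod.intCast_zmod_eq_zero_iff_dvd ε p).mpr h
    have := (legendreSym.eq_zero_iff p ε).mpr h0
    omega
  refine ⟨2 * u + 2, fun t ht => ?_⟩
  haveI : NeZero (p ^ t) := ⟨pow_ne_zero _ hp.ne_zero⟩
  have hempty : IsEmpty {v : ZMod (p ^ t) × ZMod (p ^ t) × ZMod (p ^ t) //
      -(ε : ZMod (p ^ t)) * v.1 ^ 2 + (p : ZMod (p ^ t)) ^ (2 * u + 1) * v.2.1 ^ 2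
        - (ε : ZMod (p ^ t)) * (p : ZMod (p ^ t)) ^ (2 * u + 1) * v.2.2 ^ 2
        = (m : ZMod (p ^ t)) * (p : ZMod (p ^ t)) ^ (2 * k + 1)} := by
    refine ⟨fun v => ?_⟩
    obtain ⟨⟨x, y, z⟩, hv⟩ := v
    simp only at hv
    set X : ℤ := (x.val : ℤ) with hX
    set Y : ℤ := (y.val : ℤ) with hY
    set Z : ℤ := (z.val : ℤ) with hZ
    have key : ((-ε * X ^ 2 + (p : ℤ) ^ (2 * u + 1) * Y ^ 2
        - ε * (p : ℤ) ^ (2 * u + 1) * Z ^ 2 - m * (p : ℤ) ^ (2 * k + 1) : ℤ)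
        : ZMod (p ^ t)) = 0 := by
      push_cast [hX, hY, hZ, ZMod.natCast_val, ZMod.intCast_cast, ZMod.cast_id]
      rw [sub_eq_zero]
      exact hv
    have hdvd : (p : ℤ) ^ t ∣ (-ε * X ^ 2 + (p : ℤ) ^ (2 * u + 1) * Y ^ 2
        - ε * (p : ℤ) ^ (2 * u + 1) * Z ^ 2 - m * (p : ℤ) ^ (2 * k + 1)) := by
      have := (ZMod.intCast_zmod_eq_zero_iff_dvd _ (p ^ t)).mp key
      push_cast at this
      exact this
    have h1 : (p : ℤ) ^ (2 * k + 2) ∣ (-ε * X ^ 2 + (p : ℤ) ^ (2 * u + 1) * Y ^ 2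
        - ε * (p : ℤ) ^ (2 * u + 1) * Z ^ 2 - m * (p : ℤ) ^ (2 * k + 1)) :=
      (pow_dvd_pow _ (by omega)).trans hdvd
    have h2 : (p : ℤ) ^ (2 * k + 2) ∣ ((p : ℤ) ^ (2 * u + 1) * Y ^ 2
        - ε * (p : ℤ) ^ (2 * u + 1) * Z ^ 2) := by
      have hle : (p : ℤ) ^ (2 * k + 2) ∣ (p : ℤ) ^ (2 * u + 1) :=
        pow_dvd_pow _ (by omega)
      exact dvd_sub (hle.mul_right _) ((hle.mul_left _).mul_right _)
    have h3 : (p : ℤ) ^ (2 * k + 2) ∣ (-ε * X ^ 2 - m * (p : ℤ) ^ (2 * k + 1)) := by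
      have := h1.sub h2
      convert this using 1
      · rfl
      · ring
    have h4 : (p : ℤ) ^ (2 * k + 1) ∣ ε * X ^ 2 := by
      have h3' : (p : ℤ) ^ (2 * k + 1) ∣ (-ε * X ^ 2 - m * (p : ℤ) ^ (2 * k + 1)) :=
        (pow_dvd_pow _ (by omega)).trans h3
      have h5 : (p : ℤ) ^ (2 * k + 1) ∣ m * (p : ℤ) ^ (2 * k + 1) := dvd_mul_left _ _
      have := dvd_neg.mpr (h3'.add h5)
      convert this using 1
      · rfl
      · ring
    have hco : IsCoprime ((p : ℤ) ^ (2 * k + 1)) ε :=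
      IsCoprime.pow_left (((Nat.prime_iff_prime_int.mp hp).coprime_iff_not_dvd.mpr hpe))
    have h5 : (p : ℤ) ^ (2 * k + 1) ∣ X ^ 2 := hco.dvd_of_dvd_mul_left h4
    have h6 : (p : ℤ) ^ (k + 1) ∣ X := by
      rw [hX]
      have hn : p ^ (2 * k + 1) ∣ x.val ^ 2 := by
        have := h5
        rw [hX] at this
        exact_mod_cast this
      exact_mod_cast aux_pow_dvd_of_sq_dvd p x.val k hp hn
    have h7 : (p : ℤ) ^ (2 * k + 2) ∣ X ^ 2 := by
      have := mul_dvd_mul h6 h6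
      rw [← pow_add] at this
      convert this using 2
      · rfl
      all_goals ring
    have h8 : (p : ℤ) ^ (2 * k + 2) ∣ m * (p : ℤ) ^ (2 * k + 1) := by
      have := ((h7.mul_left (-ε)).sub h3)
      convert this using 1
      · rfl
      · ring
    have h9 : (p : ℤ) ∣ m := by
      have hne : ((p : ℤ) ^ (2 * k + 1)) ≠ 0 := pow_ne_zero _ (by exact_mod_cast hp.ne_zero)
      rw [show (2 * k + 2) = (2 * k + 1) + 1 by ring, pow_succ, mul_comm m] at h8
      exact (mul_dvd_mul_iff_left hne).mp h8
    exact hm h9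
  rw [Nat.card_of_isEmpty]
  simp
end

section
/- Let p be an odd prime, ε a quadratic nonresidue mod p, u ≥ 0, and m with p ∤ m. For k ≤ u, the local density of the form −ε x² + p^{2u+1} y² − ε p^{2u+1} z² at n = m·p^{2k} equals p^k·(1 − (−m/p)), where (−m/p) is the Legendre symbol. -/
open Finset

/-- number of `x` in `[0, N)` with `x² ≡ c (mod N)`. -/
private def scnt (N : ℕ) (c : ℤ) : ℕ :=
  ((Finset.range N).filter (fun x : ℕ => (N:ℤ) ∣ (x:ℤ)^2 - c)).card

lemma scnt_eq_card (N : ℕ) [NeZero N] (c : ℤ) :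
    (Finset.univ.filter (fun x : ZMod N => x^2 = (c : ZMod N))).card = scnt N c := by
  unfold scnt
  apply Finset.card_bij' (fun (x : ZMod N) _ => x.val) (fun (a : ℕ) _ => (a : ZMod N))
  · intro x hx
    simp only [mem_filter, mem_univ, true_and] at hx ⊢
    refine ⟨mem_range.mpr (ZMod.val_lt x), ?_⟩
    rw [← ZMod.intCast_zmod_eq_zero_iff_dvd]
    push_cast
    rw [ZMod.natCast_val, ZMod.cast_id', id_eq, hx, sub_self]
  · intro a ha
    simp only [mem_filter, mem_range, mem_univ, true_and] at ha ⊢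
    have := (ZMod.intCast_zmod_eq_zero_iff_dvd ((a:ℤ)^2 - c) N).mpr ha.2
    push_cast at this
    linear_combination this
  · intro x _; simp [ZMod.natCast_val, ZMod.cast_id', id_eq]
  · intro a ha
    simp only [mem_filter, mem_range] at ha
    exact ZMod.val_cast_of_lt ha.1

lemma scnt_base (p : ℕ) [Fact p.Prime] (hp2 : p ≠ 2) (c : ℤ) :
    (scnt p c : ℤ) = legendreSym p c + 1 := by
  rw [← scnt_eq_card p c, ← legendreSym.card_sqrts p hp2 c]
  congr 1
  rw [Set.toFinset_setOf]

/-- periodic counting -/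
lemma count_range_mul (M : ℕ) (P : ℕ → Prop) [DecidablePred P]
    (hP : ∀ x, P (x + M) ↔ P x) (d : ℕ) :
    ((range (d*M)).filter P).card = d * ((range M).filter P).card := by
  induction d with
  | zero => simp
  | succ d ih =>
    have hsplit : range ((d+1)*M) = range (d*M) ∪ Ico (d*M) ((d+1)*M) := by
      simp only [range_eq_Ico]
      exact (Finset.Ico_union_Ico_eq_Ico (Nat.zero_le _)
        (Nat.mul_le_mul_right M (Nat.le_succ d))).symm
    rw [hsplit, filter_union, card_union_of_disjoint, ih]
    · have : ((Ico (d*M) ((d+1)*M)).filter P).card = ((range M).filter P).card := by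
        apply Finset.card_bij' (fun x _ => x - d*M) (fun y _ => y + d*M)
        · intro x hx
          simp only [mem_filter, mem_Ico, mem_range] at hx ⊢
          obtain ⟨⟨h1, h2⟩, hp⟩ := hx
          have hsm : (d+1)*M = d*M + M := Nat.succ_mul d M
          constructor
          · omega
          · have : x = (x - d*M) + d*M := by omega
            rw [this] at hp
            have key : ∀ e y, P (y + e*M) ↔ P y := by
              intro e
              induction e with
              | zero => simp
              | succ e ihe => intro y; rw [Nat.succ_mul, ← Nat.add_assoc, hP, ihe]
            exact (key d _).mp hp
        · intro y hy
          simp only [mem_filter, mem_Ico, mem_range] at hy ⊢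
          have key : ∀ e z, P (z + e*M) ↔ P z := by
            intro e
            induction e with
            | zero => simp
            | succ e ihe => intro z; rw [Nat.succ_mul, ← Nat.add_assoc, hP, ihe]
          have hsm : (d+1)*M = d*M + M := Nat.succ_mul d M
          exact ⟨⟨by omega, by omega⟩, (key d _).mpr hy.2⟩
        · intro x hx; simp only [mem_filter, mem_Ico] at hx; omega
        · intro y _; omega
      rw [this]; ring
    · exact Finset.disjoint_filter_filter (by rw [range_eq_Ico]; exact Finset.Ico_disjoint_Ico_consecutive 0 _ _)

lemma scnt_strip (p : ℕ) [hp : Fact p.Prime] (j t : ℕ) (h : 2*j < t) (c : ℤ) :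
    scnt (p^t) ((p:ℤ)^(2*j) * c) = p^j * scnt (p^(t-2*j)) c := by
  have hp0 : 0 < p := hp.out.pos
  have hpj : (0:ℕ) < p^j := pow_pos hp0 j
  have hsplit : t = 2*j + (t - 2*j) := by omega
  have hcast : ((p^t : ℕ):ℤ) = (p:ℤ)^(2*j) * (p:ℤ)^(t-2*j) := by
    push_cast
    rw [← pow_add, ← hsplit]
  have step1 : scnt (p^t) ((p:ℤ)^(2*j) * c)
      = ((range (p^(t-j))).filter (fun y : ℕ => ((p^(t-2*j) : ℕ):ℤ) ∣ (y:ℤ)^2 - c)).card := by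
    unfold scnt
    apply Finset.card_bij' (fun x _ => x / p^j) (fun y _ => p^j * y)
    · intro x hx
      simp only [mem_filter, mem_range] at hx ⊢
      obtain ⟨hlt, hdvd⟩ := hx
      have h2j : ((p:ℤ)^(2*j)) ∣ (x:ℤ)^2 := by
        have h1 : ((p:ℤ)^(2*j)) ∣ ((p^t:ℕ):ℤ) := by
          rw [hcast]; exact Dvd.intro _ rfl
        have h2 := h1.trans hdvd
        have h3 : ((p:ℤ)^(2*j)) ∣ (p:ℤ)^(2*j)*c := Dvd.intro c rfl
        have := dvd_add h2 h3
        simpa using this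
      have hxj : ((p:ℤ)^j) ∣ (x:ℤ) := by
        rw [← Int.pow_dvd_pow_iff (two_ne_zero)]
        rwa [← pow_mul, mul_comm j 2]
      have hxjn : p^j ∣ x := by
        rwa [← Nat.cast_pow, Int.natCast_dvd_natCast] at hxj
      constructor
      · rw [Nat.div_lt_iff_lt_mul hpj]
        calc x < p^t := hlt
        _ = p^(t-j) * p^j := by rw [← pow_add]; congr 1; omega
      · obtain ⟨y, hy⟩ := hxjn
        rw [hy, Nat.mul_div_cancel_left _ hpj]
        rw [hy] at hdvd
        rw [hcast] at hdvd
        push_cast at hdvd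
        have : (p:ℤ)^(2*j) * (p:ℤ)^(t-2*j) ∣ (p:ℤ)^(2*j) * ((y:ℤ)^2 - c) := by
          convert hdvd using 1
          rw [mul_pow, ← pow_mul, mul_comm j 2]
          ring
        have := (mul_dvd_mul_iff_left (by positivity : ((p:ℤ)^(2*j)) ≠ 0)).mp this
        push_cast
        exact this
    · intro y hy
      simp only [mem_filter, mem_range] at hy ⊢
      obtain ⟨hlt, hdvd⟩ := hy
      constructor
      · calc p^j * y < p^j * p^(t-j) := (Nat.mul_lt_mul_left hpj).mpr hlt
        _ = p^t := by rw [← pow_add]; congr 1; omega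
      · rw [hcast]
        push_cast at hdvd ⊢
        have : ((p:ℤ)^j * y)^2 - (p:ℤ)^(2*j) * c = (p:ℤ)^(2*j) * ((y:ℤ)^2 - c) := by
          rw [mul_pow, ← pow_mul, mul_comm j 2]; ring
        rw [this]
        exact mul_dvd_mul_left _ hdvd
    · intro x hx
      simp only [mem_filter, mem_range] at hx
      obtain ⟨hlt, hdvd⟩ := hx
      have h2j : ((p:ℤ)^(2*j)) ∣ (x:ℤ)^2 := by
        have h1 : ((p:ℤ)^(2*j)) ∣ ((p^t:ℕ):ℤ) := by
          rw [hcast]; exact Dvd.intro _ rfl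
        have h2 := h1.trans hdvd
        have h3 : ((p:ℤ)^(2*j)) ∣ (p:ℤ)^(2*j)*c := Dvd.intro c rfl
        simpa using dvd_add h2 h3
      have hxj : ((p:ℤ)^j) ∣ (x:ℤ) := by
        rw [← Int.pow_dvd_pow_iff (two_ne_zero)]
        rwa [← pow_mul, mul_comm j 2]
      have hxjn : p^j ∣ x := by
        rwa [← Nat.cast_pow, Int.natCast_dvd_natCast] at hxj
      exact Nat.mul_div_cancel' hxjn
    · intro y _
      exact Nat.mul_div_cancel_left _ hpj
  rw [step1]
  have hrange : p^(t-j) = p^j * p^(t-2*j) := by rw [← pow_add]; congr 1; omega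
  rw [hrange]
  apply count_range_mul
  intro x
  have key : ((x + p^(t-2*j) : ℕ):ℤ)^2 - c
      = ((x:ℤ)^2 - c) + ((p^(t-2*j):ℕ):ℤ)*(2*x + p^(t-2*j)) := by push_cast; ring
  rw [key]
  exact dvd_add_left (Dvd.intro _ rfl)

lemma scnt_lift (p : ℕ) [hp : Fact p.Prime] (hp2 : p ≠ 2) (c : ℤ) (hc : ¬(p:ℤ) ∣ c)
    (s : ℕ) (hs : 1 ≤ s) :
    scnt (p^(s+1)) c = scnt (p^s) c := by
  have hp0 : 0 < p := hp.out.pos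
  have hps : (0:ℕ) < p^s := pow_pos hp0 s
  have h2 : (2 : ZMod p) ≠ 0 := by
    intro hcon
    have h2' : ((2:ℕ) : ZMod p) = 0 := by exact_mod_cast hcon
    have : p ∣ 2 := (ZMod.natCast_eq_zero_iff 2 p).mp h2'
    exact hp2 ((Nat.prime_dvd_prime_iff_eq hp.out Nat.prime_two).mp this)
  unfold scnt
  rw [Finset.card_eq_sum_card_fiberwise (f := fun x => x % p^s)
    (t := (range (p^s)).filter (fun y : ℕ => ((p^s:ℕ):ℤ) ∣ (y:ℤ)^2 - c))]
  · have hfib : ∀ y ∈ (range (p^s)).filter (fun y : ℕ => ((p^s:ℕ):ℤ) ∣ (y:ℤ)^2 - c),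
        ((((range (p^(s+1))).filter (fun x : ℕ => ((p^(s+1):ℕ):ℤ) ∣ (x:ℤ)^2 - c)).filter
          (fun a => a % p^s = y)).card) = 1 := by
      intro y hy
      rw [Finset.filter_filter]
      simp only [mem_filter, mem_range] at hy
      obtain ⟨hylt, hyd⟩ := hy
      obtain ⟨w, hw⟩ := hyd
      -- y is a unit mod p
      have hpdvdps : (p:ℤ) ∣ ((p^s:ℕ):ℤ) := by
        push_cast; exact dvd_pow_self _ (by omega)
      have hyu : ((y:ℕ) : ZMod p) ≠ 0 := by
        intro hcon
        have hpy : (p:ℤ) ∣ (y:ℤ) :=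
          Int.natCast_dvd_natCast.mpr ((ZMod.natCast_eq_zero_iff y p).mp hcon)
        apply hc
        have h1 : (p:ℤ) ∣ (y:ℤ)^2 - c := hpdvdps.trans (Dvd.intro w hw.symm)
        have h2' : (p:ℤ) ∣ (y:ℤ)^2 := by rw [sq]; exact hpy.mul_right _
        simpa using dvd_sub h2' h1
      have h2y : (2 * (y:ℕ) : ZMod p) ≠ 0 := mul_ne_zero h2 hyu
      set i₀ : ZMod p := -(w : ZMod p) / (2 * (y:ℕ)) with hi₀
      have keyz : ∀ ii : ZMod p, 2*(y:ℕ)*ii + (w:ZMod p) = 0 ↔ ii = i₀ := by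
        intro ii
        rw [hi₀, eq_div_iff h2y]
        constructor
        · intro h; linear_combination h
        · intro h; linear_combination h
      have key : ∀ i : ℕ, (((p^(s+1):ℕ)):ℤ) ∣ ((p^s * i + y :ℕ):ℤ)^2 - c ↔ (i : ZMod p) = i₀ := by
        intro i
        have e1 : ((p^s * i + y :ℕ):ℤ)^2 - c
            = ((p^s:ℕ):ℤ) * (((p^s:ℕ):ℤ) * i^2 + (2*i*y + w)) := by
          push_cast
          push_cast at hw
          linear_combination hw
        have e2 : (((p^(s+1):ℕ)):ℤ) = ((p^s:ℕ):ℤ) * (p:ℤ) := by push_cast; ring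
        rw [e1, e2, mul_dvd_mul_iff_left (by positivity : ((p^s:ℕ):ℤ) ≠ 0)]
        have hpp : (p:ℤ) ∣ ((p^s:ℕ):ℤ) * (i:ℤ)^2 := hpdvdps.mul_right _
        rw [dvd_add_right hpp, ← ZMod.intCast_zmod_eq_zero_iff_dvd]
        push_cast
        rw [show (2*(i:ZMod p)*(y:ℕ) + w) = 2*(y:ℕ)*(i:ZMod p) + w by ring]
        exact keyz _
      apply Finset.card_eq_one.mpr
      refine ⟨p^s * i₀.val + y, ?_⟩
      ext x
      simp only [mem_filter, mem_range, mem_singleton]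
      constructor
      · rintro ⟨hxlt, hxP, hxm⟩
        have hxe : x = p^s * (x / p^s) + y := by
          conv_lhs => rw [← Nat.div_add_mod x (p^s)]
          rw [hxm]
        have hip : x / p^s < p := by
          rw [Nat.div_lt_iff_lt_mul hps]
          calc x < p^(s+1) := hxlt
          _ = p * p^s := by ring
        have := (key (x / p^s)).mp (by rw [← hxe]; exact hxP)
        have hval : x / p^s = i₀.val := by
          rw [← ZMod.val_cast_of_lt hip, this]
        rw [hxe, hval]
      · rintro rfl
        have hi₀lt : i₀.val < p := ZMod.val_lt i₀
        refine ⟨?_, ?_, ?_⟩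
        · calc p^s * i₀.val + y < p^s * i₀.val + p^s := by omega
          _ = p^s * (i₀.val + 1) := by ring
          _ ≤ p^s * p := Nat.mul_le_mul_left _ (by omega)
          _ = p^(s+1) := by ring
        · apply (key i₀.val).mpr
          rw [ZMod.natCast_val, ZMod.cast_id', id_eq]
        · rw [Nat.mul_add_mod, Nat.mod_eq_of_lt hylt]
    rw [Finset.sum_congr rfl hfib, Finset.sum_const, smul_eq_mul, mul_one]
  · intro x hx
    simp only [mem_coe, mem_filter, mem_range] at hx ⊢
    obtain ⟨hxlt, hxd⟩ := hx
    refine ⟨Nat.mod_lt x hps, ?_⟩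
    have hdown : ((p^s:ℕ):ℤ) ∣ (x:ℤ)^2 - c := by
      refine dvd_trans ?_ hxd
      push_cast
      exact pow_dvd_pow _ (Nat.le_succ s)
    have hxe : (x:ℤ) = ((p^s:ℕ):ℤ) * ((x / p^s : ℕ):ℤ) + ((x % p^s : ℕ):ℤ) := by
      push_cast
      exact_mod_cast congrArg (Nat.cast : ℕ → ℤ) (Nat.div_add_mod x (p^s)).symm
    have e3 : ((x % p^s : ℕ):ℤ)^2 - c = ((x:ℤ)^2 - c)
        - ((p^s:ℕ):ℤ) * (((p^s:ℕ):ℤ)*((x / p^s : ℕ):ℤ)^2 + 2*((x / p^s : ℕ):ℤ)*((x % p^s : ℕ):ℤ)) := by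
      rw [hxe]; ring
    rw [e3]
    exact dvd_sub hdown (Dvd.intro _ rfl)

private lemma scnt_congr (N : ℕ) [NeZero N] (c₁ c₂ : ℤ) (h : (c₁ : ZMod N) = (c₂ : ZMod N)) :
    scnt N c₁ = scnt N c₂ := by
  rw [← scnt_eq_card N c₁, ← scnt_eq_card N c₂, h]

private lemma scnt_pow_eq (p : ℕ) [hp : Fact p.Prime] (hp2 : p ≠ 2) (c : ℤ)
    (hc : ¬(p:ℤ) ∣ c) : ∀ s : ℕ, 1 ≤ s → scnt (p^s) c = scnt p c := by
  intro s hs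
  induction s with
  | zero => omega
  | succ n ih =>
    rcases Nat.eq_or_lt_of_le hs with h1 | h1
    · rw [← h1, pow_one]
    · have hn : 1 ≤ n := by omega
      rw [scnt_lift p hp2 c hc n hn, ih hn]

private lemma scnt_key (p : ℕ) [hp : Fact p.Prime] (hp2 : p ≠ 2) (j t : ℕ) (h : 2*j < t)
    (c : ℤ) (hc : ¬(p:ℤ) ∣ c) :
    scnt (p^t) ((p:ℤ)^(2*j) * c) = p^j * scnt p c := by
  rw [scnt_strip p j t h c, scnt_pow_eq p hp2 c hc (t - 2*j) (by omega)]

/-- Let `p` be an odd prime, `ε` a quadratic nonresidue mod `p`, `0 ≤ k ≤ u`,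
and `m` with `p ∤ m`. The local density of `−ε x² + p^(2u+1) y² − ε p^(2u+1) z²`
at `n = m·p^(2k)` equals `p^k · (1 − (−m/p))`. -/
theorem localDensity_anisotropic_low_even_valuation (p : ℕ) [Fact p.Prime] (hp2 : p ≠ 2)
    (ε : ℤ) (hε : legendreSym p ε = -1) (u k : ℕ) (hk : k ≤ u)
    (m : ℤ) (hm : ¬ (p : ℤ) ∣ m) :
    ∃ T : ℕ, ∀ t ≥ T,
      (Nat.card {v : ZMod (p ^ t) × ZMod (p ^ t) × ZMod (p ^ t) //
          -(ε : ZMod (p ^ t)) * v.1 ^ 2 + (p : ZMod (p ^ t)) ^ (2 * u + 1) * v.2.1 ^ 2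
            - (ε : ZMod (p ^ t)) * (p : ZMod (p ^ t)) ^ (2 * u + 1) * v.2.2 ^ 2
            = (m : ZMod (p ^ t)) * (p : ZMod (p ^ t)) ^ (2 * k)} : ℚ)
          / (p : ℚ) ^ (2 * t)
        = (p : ℚ) ^ k * (1 - (legendreSym p (-m) : ℚ)) := by
  have hp : p.Prime := Fact.out
  refine ⟨2*u+2, fun t ht => ?_⟩
  haveI : NeZero (p^t) := ⟨pow_ne_zero t hp.ne_zero⟩
  have hprime : Prime (p:ℤ) := Nat.prime_iff_prime_int.mp hp
  -- `p` does not divide `ε`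
  have hpe : ¬ (p:ℤ) ∣ ε := by
    intro h
    have h0 : ((ε:ℤ) : ZMod p) = 0 := (ZMod.intCast_zmod_eq_zero_iff_dvd ε p).mpr h
    have := (legendreSym.eq_zero_iff p ε).mpr h0
    omega
  -- an integer inverse of ε mod p^t
  obtain ⟨a, b, hab⟩ := ((hprime.coprime_iff_not_dvd.mpr hpe).symm.pow_right (n := t))
  have hee : ((p^t : ℕ):ℤ) ∣ ε * a - 1 := ⟨-b, by push_cast; linear_combination hab⟩
  have hRone : (ε : ZMod (p^t)) * (a : ZMod (p^t)) = 1 := by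
    have h0 := (ZMod.intCast_zmod_eq_zero_iff_dvd (ε*a - 1) (p^t)).mpr hee
    push_cast at h0
    linear_combination h0
  have hmod1 : ((ε*a : ℤ) : ZMod p) = ((1 : ℤ) : ZMod p) := by
    have hdvd : (p:ℤ) ∣ ε*a - 1 := by
      refine dvd_trans ?_ hee
      push_cast
      exact dvd_pow_self _ (by omega)
    have h0 := (ZMod.intCast_zmod_eq_zero_iff_dvd (ε*a - 1) p).mpr hdvd
    push_cast at h0 ⊢
    linear_combination h0
  have hlegcongr : ∀ x y : ℤ, (x : ZMod p) = (y : ZMod p) →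
      legendreSym p x = legendreSym p y := by
    intro x y h
    unfold legendreSym
    rw [h]
  have hleg1 : legendreSym p 1 = 1 := by
    unfold legendreSym
    rw [Int.cast_one, MulChar.map_one]
  have hLa : legendreSym p a = -1 := by
    have h1 := hlegcongr _ _ hmod1
    rw [legendreSym.mul, hε, hleg1] at h1
    linarith
  have hpa : ¬ (p:ℤ) ∣ a := by
    intro h
    have h0 : ((a:ℤ) : ZMod p) = 0 := (ZMod.intCast_zmod_eq_zero_iff_dvd a p).mpr h
    have := (legendreSym.eq_zero_iff p a).mpr h0
    omega
  set c0 : ℤ := a * -m with hc0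
  have hca : ¬ (p:ℤ) ∣ c0 := by
    intro h
    rcases hprime.dvd_mul.mp h with h' | h'
    · exact hpa h'
    · exact hm (Int.dvd_neg.mp h')
  -- the main count
  have main_count : Nat.card {v : ZMod (p ^ t) × ZMod (p ^ t) × ZMod (p ^ t) //
          -(ε : ZMod (p ^ t)) * v.1 ^ 2 + (p : ZMod (p ^ t)) ^ (2 * u + 1) * v.2.1 ^ 2
            - (ε : ZMod (p ^ t)) * (p : ZMod (p ^ t)) ^ (2 * u + 1) * v.2.2 ^ 2
            = (m : ZMod (p ^ t)) * (p : ZMod (p ^ t)) ^ (2 * k)}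
      = p^t * p^t * (p^k * scnt p c0) := by
    rw [Nat.card_eq_fintype_card]
    rw [Fintype.card_congr (show _ ≃ Σ yz : ZMod (p^t) × ZMod (p^t),
        {x : ZMod (p^t) // -(ε : ZMod (p ^ t)) * x ^ 2
            + (p : ZMod (p ^ t)) ^ (2 * u + 1) * yz.1 ^ 2
            - (ε : ZMod (p ^ t)) * (p : ZMod (p ^ t)) ^ (2 * u + 1) * yz.2 ^ 2
            = (m : ZMod (p ^ t)) * (p : ZMod (p ^ t)) ^ (2 * k)} from
      { toFun := fun v => ⟨(v.1.2.1, v.1.2.2), ⟨v.1.1, v.2⟩⟩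
        invFun := fun s => ⟨(s.2.1, s.1.1, s.1.2), s.2.2⟩
        left_inv := fun v => rfl
        right_inv := fun s => rfl })]
    rw [Fintype.card_sigma]
    have hyz : ∀ yz : ZMod (p^t) × ZMod (p^t),
        Fintype.card {x : ZMod (p^t) // -(ε : ZMod (p ^ t)) * x ^ 2
            + (p : ZMod (p ^ t)) ^ (2 * u + 1) * yz.1 ^ 2
            - (ε : ZMod (p ^ t)) * (p : ZMod (p ^ t)) ^ (2 * u + 1) * yz.2 ^ 2
            = (m : ZMod (p ^ t)) * (p : ZMod (p ^ t)) ^ (2 * k)}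
          = p^k * scnt p c0 := by
      rintro ⟨y, z⟩
      rw [Fintype.card_subtype]
      set c1 : ℤ := a * ((p:ℤ)^(2*(u-k)+1) * ((y.val:ℤ)^2 - ε * (z.val:ℤ)^2) - m) with hc1
      have hcastc : (((p:ℤ)^(2*k) * c1 : ℤ) : ZMod (p^t))
          = (a : ZMod (p^t)) * ((p : ZMod (p^t))^(2*u+1) * y^2
            - (ε : ZMod (p^t)) * (p : ZMod (p^t))^(2*u+1) * z^2
            - (m : ZMod (p^t)) * (p : ZMod (p^t))^(2*k)) := by
        have hpow : (p : ZMod (p^t))^(2*u+1)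
            = (p : ZMod (p^t))^(2*k) * (p : ZMod (p^t))^(2*(u-k)+1) := by
          rw [← pow_add]
          congr 1
          omega
        rw [hpow, hc1]
        push_cast
        simp only [ZMod.natCast_val, ZMod.cast_id]
        ring
      have hiff : ∀ x : ZMod (p^t),
          (-(ε : ZMod (p ^ t)) * x ^ 2 + (p : ZMod (p ^ t)) ^ (2 * u + 1) * y ^ 2
            - (ε : ZMod (p ^ t)) * (p : ZMod (p ^ t)) ^ (2 * u + 1) * z ^ 2
            = (m : ZMod (p ^ t)) * (p : ZMod (p ^ t)) ^ (2 * k))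
          ↔ x^2 = (((p:ℤ)^(2*k) * c1 : ℤ) : ZMod (p^t)) := by
        intro x
        rw [hcastc]
        constructor
        · intro h
          linear_combination (-(a : ZMod (p^t))) * h - x ^ 2 * hRone
        · intro h
          linear_combination (-(ε : ZMod (p^t))) * h
            - ((p : ZMod (p^t))^(2*u+1) * y^2
              - (ε : ZMod (p^t)) * (p : ZMod (p^t))^(2*u+1) * z^2
              - (m : ZMod (p^t)) * (p : ZMod (p^t))^(2*k)) * hRone
      rw [Finset.filter_congr (fun x _ => hiff x)]
      rw [scnt_eq_card (p^t) ((p:ℤ)^(2*k) * c1)]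
      have hc1c0 : ((c1 : ℤ) : ZMod p) = ((c0 : ℤ) : ZMod p) := by
        rw [hc1, hc0]
        push_cast
        rw [ZMod.natCast_self]
        rw [zero_pow (by omega : 2*(u-k)+1 ≠ 0)]
        ring
      have hc1p : ¬ (p:ℤ) ∣ c1 := by
        intro h
        apply hca
        rw [← ZMod.intCast_zmod_eq_zero_iff_dvd] at h ⊢
        rw [← hc1c0]
        exact h
      rw [scnt_key p hp2 k t (by omega) c1 hc1p]
      rw [scnt_congr p c1 c0 hc1c0]
    rw [Finset.sum_congr rfl (fun yz _ => hyz yz), Finset.sum_const, smul_eq_mul]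
    have hcard : (Finset.univ : Finset (ZMod (p^t) × ZMod (p^t))).card = p^t * p^t := by
      rw [Finset.card_univ, Fintype.card_prod, ZMod.card]
    rw [hcard]
  rw [main_count]
  have hscnt : ((scnt p c0 : ℤ) : ℚ) = 1 - (legendreSym p (-m) : ℚ) := by
    have h1 : (scnt p c0 : ℤ) = legendreSym p c0 + 1 := scnt_base p hp2 c0
    rw [hc0, legendreSym.mul, hLa] at h1
    rw [h1]
    push_cast
    ring
  have hpq : (p:ℚ) ≠ 0 := by exact_mod_cast hp.ne_zero
  push_cast
  push_cast at hscnt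
  rw [hscnt]
  field_simp
  ring
end

section
/- Let p be an odd prime and v a nonnegative even integer, and m with p ∤ m. For 2k < v, the local density of the form −x² − p^v·y·z at n = m·p^{2k} equals p^k·(1 + (−m/p)), and at n = m·p^{2k+1} with 2k+1 < v it equals 0. -/
section LocalDensityAux

section aux
variable {p : ℕ} (hp : p.Prime)

lemma pk_dvd_of_sq (hp : p.Prime) : ∀ (k : ℕ) (x : ℤ), (p:ℤ)^(2*k) ∣ x^2 → (p:ℤ)^k ∣ x := by
  have hpz : Prime (p:ℤ) := Nat.prime_iff_prime_int.mp hp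
  intro k
  induction k with
  | zero => intro x _; simp
  | succ k ih =>
    intro x hx
    have h1 : (p:ℤ) ∣ x := by
      apply hpz.dvd_of_dvd_pow (n := 2)
      exact dvd_trans (dvd_pow_self (p:ℤ) (by omega)) hx
    obtain ⟨y, rfl⟩ := h1
    have h2 : (p:ℤ)^(2*k) ∣ y^2 := by
      have hne : ((p:ℤ)^2) ≠ 0 := pow_ne_zero _ (by exact_mod_cast hp.ne_zero)
      rw [mul_pow] at hx
      have : (p:ℤ)^(2*(k+1)) = (p:ℤ)^2 * (p:ℤ)^(2*k) := by ring
      rw [this] at hx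
      exact (mul_dvd_mul_iff_left hne).mp hx
    obtain ⟨z, rfl⟩ := ih y h2
    exact ⟨z, by ring⟩

lemma pk1_dvd_of_sq (hp : p.Prime) : ∀ (k : ℕ) (x : ℤ), (p:ℤ)^(2*k+1) ∣ x^2 → (p:ℤ)^(k+1) ∣ x := by
  have hpz : Prime (p:ℤ) := Nat.prime_iff_prime_int.mp hp
  intro k
  induction k with
  | zero =>
    intro x hx
    simpa using hpz.dvd_of_dvd_pow (n := 2) (by simpa using hx)
  | succ k ih =>
    intro x hx
    have h1 : (p:ℤ) ∣ x := by
      apply hpz.dvd_of_dvd_pow (n := 2)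
      exact dvd_trans (dvd_pow_self (p:ℤ) (by omega)) hx
    obtain ⟨y, rfl⟩ := h1
    have h2 : (p:ℤ)^(2*k+1) ∣ y^2 := by
      have hne : ((p:ℤ)^2) ≠ 0 := pow_ne_zero _ (by exact_mod_cast hp.ne_zero)
      rw [mul_pow] at hx
      have : (p:ℤ)^(2*(k+1)+1) = (p:ℤ)^2 * (p:ℤ)^(2*k+1) := by ring
      rw [this] at hx
      exact (mul_dvd_mul_iff_left hne).mp hx
    obtain ⟨z, rfl⟩ := ih y h2
    exact ⟨z, by ring⟩

end aux

lemma card_sqrt_one {p : ℕ} [hp : Fact p.Prime] (hp2 : p ≠ 2) (M : ℕ) (hM : 1 ≤ M) :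
    Nat.card {u : ZMod (p^M) // u * u = 1} = 2 := by
  haveI : NeZero (p^M) := ⟨pow_ne_zero _ hp.out.ne_zero⟩
  have hpz : Prime (p:ℤ) := Nat.prime_iff_prime_int.mp hp.out
  have hchar : ∀ u : ZMod (p^M), u * u = 1 ↔ u = 1 ∨ u = -1 := by
    intro u
    constructor
    · intro h
      have hu : u = ((u.val : ℤ) : ZMod (p^M)) := by push_cast; rw [ZMod.natCast_val, ZMod.cast_id]
      set a : ℤ := (u.val : ℤ) with ha
      have h0 : (((a - 1) * (a + 1) : ℤ) : ZMod (p^M)) = 0 := by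
        push_cast
        rw [← hu]
        linear_combination h
      have hdvd := (ZMod.intCast_zmod_eq_zero_iff_dvd _ _).mp h0
      push_cast at hdvd
      by_cases hc : (p:ℤ) ∣ a - 1
      · have hc2 : ¬ (p:ℤ) ∣ a + 1 := by
          intro h2
          have hd2 : (p:ℤ) ∣ 2 := by
            have := dvd_sub h2 hc
            simpa using this
          have : p ∣ 2 := by exact_mod_cast hd2
          have := Nat.le_of_dvd (by norm_num) this
          have := hp.out.two_le
          exact hp2 (by omega)
        have hcop : IsCoprime ((p:ℤ)^M) (a + 1) :=
          ((hpz.coprime_iff_not_dvd).mpr hc2).pow_left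
        have hfin : ((p:ℤ))^M ∣ a - 1 := hcop.dvd_of_dvd_mul_right hdvd
        left
        rw [hu, ← sub_eq_zero,
          show ((a:ℤ) : ZMod (p^M)) - 1 = (((a - 1 : ℤ)) : ZMod (p^M)) by push_cast; ring,
          ZMod.intCast_zmod_eq_zero_iff_dvd]
        exact_mod_cast hfin
      · have hcop : IsCoprime ((p:ℤ)^M) (a - 1) :=
          ((hpz.coprime_iff_not_dvd).mpr hc).pow_left
        have hfin : ((p:ℤ))^M ∣ a + 1 :=
          hcop.dvd_of_dvd_mul_right (by rwa [mul_comm] at hdvd)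
        right
        rw [hu, ← sub_eq_zero,
          show ((a:ℤ) : ZMod (p^M)) - (-1) = (((a + 1 : ℤ)) : ZMod (p^M)) by push_cast; ring,
          ZMod.intCast_zmod_eq_zero_iff_dvd]
        exact_mod_cast hfin
    · rintro (rfl | rfl) <;> ring
  have hne : (1 : ZMod (p^M)) ≠ -1 := by
    intro h
    have h2 : ((2 : ℤ) : ZMod (p^M)) = 0 := by push_cast; linear_combination h
    rw [ZMod.intCast_zmod_eq_zero_iff_dvd] at h2
    have h2' : (p:ℕ)^M ∣ 2 := by exact_mod_cast h2
    have := Nat.le_of_dvd (by norm_num) h2'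
    have h3 : p ≤ p ^ M := Nat.le_self_pow (Nat.one_le_iff_ne_zero.mp hM) p
    have := hp.out.two_le
    exact hp2 (by omega)
  rw [Nat.card_eq_fintype_card, Fintype.card_subtype]
  have : Finset.filter (fun u : ZMod (p^M) => u * u = 1) Finset.univ = {1, -1} := by
    ext u
    simp [hchar u]
  rw [this, Finset.card_insert_of_notMem (by simpa using hne), Finset.card_singleton]

lemma sqrt_lift {p : ℕ} [hp : Fact p.Prime] (hp2 : p ≠ 2) (m : ℤ) (hm : ¬ (p:ℤ) ∣ m)
    (hleg : legendreSym p (-m) = 1) : ∀ M : ℕ, ∃ b : ℤ, (p:ℤ)^M ∣ b^2 + m := by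
  have hmp : ((-m : ℤ) : ZMod p) ≠ 0 := by
    intro h
    rw [ZMod.intCast_zmod_eq_zero_iff_dvd] at h
    exact hm (dvd_neg.mp h)
  have hbase : ∃ b : ℤ, (p:ℤ) ∣ b^2 + m := by
    obtain ⟨r, hr⟩ := (legendreSym.eq_one_iff p hmp).mp hleg
    refine ⟨(r.val : ℤ), ?_⟩
    rw [← ZMod.intCast_zmod_eq_zero_iff_dvd]
    push_cast
    rw [ZMod.natCast_val, ZMod.cast_id]
    push_cast at hr
    linear_combination -hr
  intro M
  induction M with
  | zero => exact ⟨0, by simp⟩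
  | succ M ih =>
    rcases Nat.eq_zero_or_pos M with hM0 | hM1
    · subst hM0; simpa using hbase
    obtain ⟨b, c, hc⟩ := ih
    have hpb : ¬ (p:ℤ) ∣ b := by
      intro hdvd
      apply hm
      have h1 : (p:ℤ) ∣ b^2 + m := (dvd_pow_self (p:ℤ) hM1.ne').trans ⟨c, hc⟩
      have h2 : (p:ℤ) ∣ b^2 := by rw [sq]; exact hdvd.mul_right b
      simpa using h1.sub h2
    have h2b : ((2*b : ℤ) : ZMod p) ≠ 0 := by
      intro h
      rw [ZMod.intCast_zmod_eq_zero_iff_dvd] at h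
      have hpz : Prime (p:ℤ) := Nat.prime_iff_prime_int.mp hp.out
      rcases hpz.dvd_mul.mp h with h' | h'
      · have hp2' : (p:ℤ) ∣ 2 := h'
        have : p ∣ 2 := by exact_mod_cast hp2'
        have h2le := hp.out.two_le
        have := Nat.le_of_dvd (by norm_num) this
        exact hp2 (by omega)
      · exact hpb h'
    set A := ((2*b : ℤ) : ZMod p) with hA
    set hhv : ZMod p := -A⁻¹ * ((c : ℤ) : ZMod p) with hhdef
    set H : ℤ := (hhv.val : ℤ) with hHdef
    have key : (p:ℤ) ∣ 2*b*H + c := by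
      rw [← ZMod.intCast_zmod_eq_zero_iff_dvd]
      have hH : (H : ZMod p) = hhv := by
        rw [hHdef]; push_cast; rw [ZMod.natCast_val, ZMod.cast_id]
      push_cast
      rw [show ((H:ℤ) : ZMod p) = hhv from hH, hhdef]
      have hAne : A ≠ 0 := h2b
      have hAeq : A = 2 * (b : ZMod p) := by rw [hA]; push_cast; ring
      rw [← hAeq]
      field_simp
      ring
    obtain ⟨d, hd⟩ := key
    refine ⟨b + (p:ℤ)^M * H, d + (p:ℤ)^(M-1) * H^2, ?_⟩
    have heq : (p:ℤ)^(2*M) = (p:ℤ)^(M+1) * (p:ℤ)^(M-1) := by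
      rw [← pow_add]; congr 1; omega
    linear_combination hc + (p:ℤ)^M * hd + H^2 * heq

lemma card_sqrt {p : ℕ} [hp : Fact p.Prime] (hp2 : p ≠ 2) (m : ℤ) (hm : ¬ (p:ℤ) ∣ m)
    (M : ℕ) (hM : 1 ≤ M) :
    Nat.card {u : ZMod (p^M) // u^2 + (m : ZMod (p^M)) = 0}
      = if legendreSym p (-m) = 1 then 2 else 0 := by
  haveI : NeZero (p^M) := ⟨pow_ne_zero _ hp.out.ne_zero⟩
  have hmp : ((-m : ℤ) : ZMod p) ≠ 0 := by
    intro h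
    rw [ZMod.intCast_zmod_eq_zero_iff_dvd] at h
    exact hm (dvd_neg.mp h)
  by_cases hleg : legendreSym p (-m) = 1
  · rw [if_pos hleg]
    obtain ⟨b, hb⟩ := sqrt_lift hp2 m hm hleg M
    have hpb : ¬ (p:ℤ) ∣ b := by
      intro hdvd
      apply hm
      have h1 : (p:ℤ) ∣ b^2 + m :=
        (dvd_pow_self (p:ℤ) (Nat.one_le_iff_ne_zero.mp hM)).trans hb
      have h2 : (p:ℤ) ∣ b^2 := by rw [sq]; exact hdvd.mul_right b
      simpa using h1.sub h2
    set β : ZMod (p^M) := ((b : ℤ) : ZMod (p^M)) with hβ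
    have hβsq : β^2 + (m : ZMod (p^M)) = 0 := by
      have : ((b^2 + m : ℤ) : ZMod (p^M)) = 0 := by
        rw [ZMod.intCast_zmod_eq_zero_iff_dvd]
        exact_mod_cast hb
      push_cast at this
      rw [hβ]; push_cast; linear_combination this
    have hpz : Prime (p:ℤ) := Nat.prime_iff_prime_int.mp hp.out
    have hcop : IsCoprime b ((p:ℤ)^M) :=
      ((hpz.coprime_iff_not_dvd).mpr hpb).symm.pow_right
    obtain ⟨u0, v0, huv⟩ := hcop
    set γ : ZMod (p^M) := ((u0 : ℤ) : ZMod (p^M)) with hγ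
    have hγβ : γ * β = 1 := by
      have : ((u0 * b + v0 * (p:ℤ)^M : ℤ) : ZMod (p^M)) = ((1:ℤ) : ZMod (p^M)) := by
        rw [huv]
      push_cast at this
      have hpM : ((p : ZMod (p^M)))^M = 0 := by
        have : (((p^M : ℕ)) : ZMod (p^M)) = 0 := ZMod.natCast_self _
        push_cast at this
        exact this
      rw [hγ, hβ]
      push_cast
      rw [hpM] at this
      linear_combination this
    have e : {u : ZMod (p^M) // u^2 + (m : ZMod (p^M)) = 0} ≃ {w : ZMod (p^M) // w * w = 1} := by
      refine ⟨fun u => ⟨u.1 * γ, ?_⟩, fun w => ⟨w.1 * β, ?_⟩, ?_, ?_⟩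
      · have hu := u.2
        have : (u.1 * γ) * (u.1 * γ) = (u.1^2) * γ^2 := by ring
        rw [this]
        have h1 : u.1^2 = β^2 := by linear_combination hu - hβsq
        rw [h1]
        calc β^2 * γ^2 = (γ * β) * (γ * β) := by ring
        _ = 1 := by rw [hγβ]; ring
      · have hw := w.2
        have : (w.1 * β)^2 + (m : ZMod (p^M)) = (w.1 * w.1) * β^2 + m := by ring
        rw [this, hw]
        linear_combination hβsq
      · intro u
        ext
        simp only
        calc u.1 * γ * β = u.1 * (γ * β) := by ring
        _ = u.1 := by rw [hγβ]; ring
      · intro w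
        ext
        simp only
        calc w.1 * β * γ = w.1 * (γ * β) := by ring
        _ = w.1 := by rw [hγβ]; ring
    rw [Nat.card_congr e]
    exact card_sqrt_one hp2 M hM
  · rw [if_neg hleg]
    have hempty : IsEmpty {u : ZMod (p^M) // u^2 + (m : ZMod (p^M)) = 0} := by
      constructor
      rintro ⟨u, hu⟩
      have hdvd : p ∣ p^M := dvd_pow_self p (Nat.one_le_iff_ne_zero.mp hM)
      set f := ZMod.castHom hdvd (ZMod p)
      have hξ : (f u)^2 + ((m:ℤ) : ZMod p) = 0 := by
        have := congrArg f hu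
        rw [map_add, map_pow, map_intCast, map_zero] at this
        exact this
      apply hleg
      rw [legendreSym.eq_one_iff p hmp]
      exact ⟨f u, by push_cast; linear_combination -hξ⟩
    simp []

lemma card_cast_fiber (A B : ℕ) (hA : 0 < A) (hB : 0 < B)
    (P : ZMod A → Prop) [DecidablePred P] :
    Nat.card {x : ZMod (A*B) // P (ZMod.castHom (dvd_mul_right A B) (ZMod A) x)}
      = B * Nat.card {a : ZMod A // P a} := by
  haveI : NeZero A := ⟨hA.ne'⟩
  haveI : NeZero B := ⟨hB.ne'⟩
  haveI : NeZero (A*B) := ⟨by positivity⟩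
  have hcast : ∀ x : ZMod (A*B), ZMod.castHom (dvd_mul_right A B) (ZMod A) x
      = ((x.val : ℕ) : ZMod A) := by
    intro x
    rw [ZMod.castHom_apply, ← ZMod.natCast_val]
  have e : {x : ZMod (A*B) // P (ZMod.castHom (dvd_mul_right A B) (ZMod A) x)}
      ≃ {a : ZMod A // P a} × ZMod B := by
    refine ⟨fun x => (⟨ZMod.castHom (dvd_mul_right A B) (ZMod A) x.1, x.2⟩,
        ((x.1.val / A : ℕ) : ZMod B)),
      fun ab => ⟨((ab.1.1.val + A * ab.2.val : ℕ) : ZMod (A*B)), ?_⟩, ?_, ?_⟩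
    · rw [hcast, ZMod.val_natCast]
      have hlt : ab.1.1.val + A * ab.2.val < A * B := by
        have h1 : ab.1.1.val < A := ZMod.val_lt _
        have h2 : ab.2.val < B := ZMod.val_lt _
        have h3 : A * ab.2.val + A ≤ A * B := by
          calc A * ab.2.val + A = A * (ab.2.val + 1) := by ring
          _ ≤ A * B := Nat.mul_le_mul_left _ (by omega)
        omega
      rw [Nat.mod_eq_of_lt hlt]
      have : ((ab.1.1.val + A * ab.2.val : ℕ) : ZMod A) = ab.1.1 := by
        push_cast [ZMod.natCast_self]
        rw [ZMod.natCast_val, ZMod.cast_id]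
        ring
      rw [this]
      exact ab.1.2
    · intro x
      ext
      simp only
      rw [hcast, ZMod.val_natCast, ZMod.val_natCast]
      have hxlt : x.1.val < A * B := ZMod.val_lt _
      have hdiv : x.1.val / A < B := by
        rw [Nat.div_lt_iff_lt_mul hA]
        exact lt_of_lt_of_eq hxlt (mul_comm A B)
      rw [Nat.mod_eq_of_lt hdiv, Nat.mod_add_div]
      exact ZMod.natCast_rightInverse x.1
    · intro ab
      have h1 : ab.1.1.val < A := ZMod.val_lt _
      have h2 : ab.2.val < B := ZMod.val_lt _
      have hlt : ab.1.1.val + A * ab.2.val < A * B := by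
        have h3 : A * ab.2.val + A ≤ A * B := by
          calc A * ab.2.val + A = A * (ab.2.val + 1) := by ring
          _ ≤ A * B := Nat.mul_le_mul_left _ (by omega)
        omega
      have hval : (((ab.1.1.val + A * ab.2.val : ℕ) : ZMod (A*B))).val
          = ab.1.1.val + A * ab.2.val := by
        rw [ZMod.val_natCast, Nat.mod_eq_of_lt hlt]
      ext
      · simp only
        rw [hcast, hval]
        push_cast [ZMod.natCast_self]
        rw [ZMod.natCast_val, ZMod.cast_id]
        ring
      · simp only
        rw [hval]
        rw [Nat.add_mul_div_left _ _ hA, Nat.div_eq_of_lt h1, zero_add]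
        exact ZMod.natCast_rightInverse ab.2
  rw [Nat.card_congr e, Nat.card_eq_fintype_card, Fintype.card_prod,
    ← Nat.card_eq_fintype_card, ← Nat.card_eq_fintype_card, Nat.card_eq_fintype_card (α := ZMod B), ZMod.card]
  ring

open Classical in
lemma dvd_iff_cast_zero (A B : ℕ) (hA : 0 < A) (hB : 0 < B) (c : ZMod (A*B)) :
    (A : ZMod (A*B)) ∣ c ↔ ZMod.castHom (dvd_mul_right A B) (ZMod A) c = 0 := by
  haveI : NeZero A := ⟨hA.ne'⟩
  haveI : NeZero (A*B) := ⟨by positivity⟩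
  constructor
  · rintro ⟨f, rfl⟩
    rw [map_mul, map_natCast, ZMod.natCast_self, zero_mul]
  · intro h
    rw [ZMod.castHom_apply, ← ZMod.natCast_val, ZMod.natCast_eq_zero_iff] at h
    obtain ⟨q, hq⟩ := h
    refine ⟨(q : ZMod (A*B)), ?_⟩
    rw [← Nat.cast_mul, ← hq]
    exact (ZMod.natCast_rightInverse c).symm

open Classical in
lemma card_mul_pow (A B : ℕ) (hA : 0 < A) (hB : 0 < B) (c : ZMod (A*B)) :
    Nat.card {z : ZMod (A*B) // (A : ZMod (A*B)) * z = c}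
      = if (A : ZMod (A*B)) ∣ c then A else 0 := by
  haveI : NeZero A := ⟨hA.ne'⟩
  haveI : NeZero B := ⟨hB.ne'⟩
  haveI : NeZero (A*B) := ⟨by positivity⟩
  by_cases hdvd : (A : ZMod (A*B)) ∣ c
  · rw [if_pos hdvd]
    obtain ⟨f, rfl⟩ := hdvd
    have e1 : {z : ZMod (A*B) // (A : ZMod (A*B)) * z = (A : ZMod (A*B)) * f}
        ≃ {z : ZMod (A*B) // (A : ZMod (A*B)) * z = 0} := by
      refine ⟨fun z => ⟨z.1 - f, by rw [mul_sub, z.2, sub_self]⟩,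
        fun z => ⟨z.1 + f, by rw [mul_add, z.2, zero_add]⟩, ?_, ?_⟩
      · intro z; ext; simp
      · intro z; ext; simp
    have e2 : ZMod A ≃ {z : ZMod (A*B) // (A : ZMod (A*B)) * z = 0} := by
      apply Equiv.ofBijective
        (f := fun u : ZMod A => (⟨((B * u.val : ℕ) : ZMod (A*B)), by
          push_cast
          rw [← mul_assoc, ← Nat.cast_mul, ZMod.natCast_self, zero_mul]⟩ : {z : ZMod (A*B) // (A : ZMod (A*B)) * z = 0}))
      constructor
      · intro u u' h
        have hval : ∀ u : ZMod A, (((B * u.val : ℕ) : ZMod (A*B))).val = B * u.val := by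
          intro u
          rw [ZMod.val_natCast, Nat.mod_eq_of_lt]
          have := ZMod.val_lt u
          calc B * u.val < B * A := by exact (Nat.mul_lt_mul_left hB).mpr this
          _ = A * B := by ring
        have := congrArg ZMod.val (Subtype.ext_iff.mp h)
        rw [hval u, hval u'] at this
        exact ZMod.val_injective _ (Nat.eq_of_mul_eq_mul_left hB this)
      · rintro ⟨z, hz⟩
        have hz' : ((A * z.val : ℕ) : ZMod (A*B)) = 0 := by
          push_cast
          rw [ZMod.natCast_val, ZMod.cast_id]
          exact hz
        rw [ZMod.natCast_eq_zero_iff] at hz'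
        have hBz : B ∣ z.val := (mul_dvd_mul_iff_left hA.ne').mp hz'
        obtain ⟨q, hq⟩ := hBz
        have hqA : q < A := by
          have := ZMod.val_lt z
          rw [hq] at this
          by_contra hcon
          push_neg at hcon
          have : A * B ≤ B * q := by calc A * B = B * A := by ring
                                        _ ≤ B * q := Nat.mul_le_mul_left _ hcon
          omega
        refine ⟨(q : ZMod A), ?_⟩
        ext
        simp only
        rw [ZMod.val_natCast, Nat.mod_eq_of_lt hqA, ← hq]
        exact ZMod.natCast_rightInverse z
    rw [Nat.card_congr (e1.trans e2.symm), Nat.card_eq_fintype_card, ZMod.card]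
  · rw [if_neg hdvd]
    have : IsEmpty {z : ZMod (A*B) // (A : ZMod (A*B)) * z = c} := by
      constructor
      rintro ⟨z, hz⟩
      exact hdvd ⟨z, hz.symm⟩
    simp

lemma card_sq_eq {p : ℕ} [hp : Fact p.Prime] (hp2 : p ≠ 2) (m : ℤ) (hm : ¬ (p:ℤ) ∣ m)
    (k r : ℕ) (hr : 1 ≤ r) :
    Nat.card {x : ZMod (p^(2*k+r)) //
        x^2 + (m : ZMod (p^(2*k+r))) * (p : ZMod (p^(2*k+r)))^(2*k) = 0}
      = p^k * (if legendreSym p (-m) = 1 then 2 else 0) := by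
  have hp0 : 0 < p := hp.out.pos
  haveI : NeZero ((p:ℕ)^(2*k+r)) := ⟨pow_ne_zero _ hp.out.ne_zero⟩
  haveI : NeZero ((p:ℕ)^r * p^k) := ⟨by positivity⟩
  set Pr : ZMod (p^r) → Prop := fun ξ => ξ^2 + (m : ZMod (p^r)) = 0 with hPr
  have hrk : (p:ℕ)^r * p^k = p^(r+k) := (pow_add p r k).symm
  have hbig : (p:ℕ)^(2*k+r) = p^k * (p^r * p^k) := by
    rw [hrk, ← pow_add]; congr 1; omega
  have hbig2 : (p:ℤ)^(2*k+r) = (p:ℤ)^(2*k) * (p:ℤ)^r := by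
    rw [← pow_add]
  have hcast : ∀ (u : ZMod (p^r * p^k)),
      ZMod.castHom (dvd_mul_right _ _) (ZMod (p^r)) u = ((u.val : ℕ) : ZMod (p^r)) := by
    intro u; rw [ZMod.castHom_apply, ← ZMod.natCast_val]
  -- the map
  set Φ : {u : ZMod (p^r * p^k) // Pr (ZMod.castHom (dvd_mul_right _ _) (ZMod (p^r)) u)}
      → {x : ZMod (p^(2*k+r)) //
          x^2 + (m : ZMod (p^(2*k+r))) * (p : ZMod (p^(2*k+r)))^(2*k) = 0} :=
    fun u => ⟨((p^k * u.1.val : ℕ) : ZMod (p^(2*k+r))), by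
      have hu := u.2
      rw [hcast] at hu
      have hdr : ((p:ℤ))^r ∣ (u.1.val : ℤ)^2 + m := by
        have h0 : (((u.1.val : ℤ)^2 + m : ℤ) : ZMod (p^r)) = 0 := by
          push_cast
          simp only [hPr] at hu
          push_cast at hu
          linear_combination hu
        have := (ZMod.intCast_zmod_eq_zero_iff_dvd _ _).mp h0
        exact_mod_cast this
      have h0 : ((((p:ℤ)^k * (u.1.val : ℤ))^2 + m * (p:ℤ)^(2*k) : ℤ)
          : ZMod (p^(2*k+r))) = 0 := by
        rw [ZMod.intCast_zmod_eq_zero_iff_dvd]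
        have : ((p:ℤ)^k * (u.1.val : ℤ))^2 + m * (p:ℤ)^(2*k)
            = (p:ℤ)^(2*k) * ((u.1.val : ℤ)^2 + m) := by ring
        rw [this]
        push_cast
        rw [hbig2]
        exact mul_dvd_mul_left _ hdr
      push_cast at h0 ⊢
      linear_combination h0⟩
    with hΦ
  have hval : ∀ u : {u : ZMod (p^r * p^k) //
      Pr (ZMod.castHom (dvd_mul_right _ _) (ZMod (p^r)) u)},
      (((p^k * u.1.val : ℕ) : ZMod (p^(2*k+r)))).val = p^k * u.1.val := by
    intro u
    rw [ZMod.val_natCast, Nat.mod_eq_of_lt]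
    rw [hbig]
    exact (Nat.mul_lt_mul_left (show 0 < p^k by positivity)).mpr (ZMod.val_lt u.1)
  have hbij : Function.Bijective Φ := by
    constructor
    · intro u u' h
      have := congrArg (fun x => ZMod.val x.1) h
      simp only [hΦ] at this
      rw [hval u, hval u'] at this
      have := Nat.eq_of_mul_eq_mul_left (show 0 < p^k by positivity) this
      exact Subtype.ext (ZMod.val_injective _ this)
    · rintro ⟨x, hx⟩
      set X : ℤ := (x.val : ℤ) with hX
      have hXnn : 0 ≤ X := Int.natCast_nonneg _
      have hXlt : X < (p:ℤ)^(2*k+r) := by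
        rw [hX]
        exact_mod_cast ZMod.val_lt x
      have hdvd : (p:ℤ)^(2*k+r) ∣ X^2 + m * (p:ℤ)^(2*k) := by
        have h0 : ((X^2 + m * (p:ℤ)^(2*k) : ℤ) : ZMod (p^(2*k+r))) = 0 := by
          push_cast
          rw [hX]
          push_cast
          rw [ZMod.natCast_val, ZMod.cast_id]
          linear_combination hx
        have := (ZMod.intCast_zmod_eq_zero_iff_dvd _ _).mp h0
        exact_mod_cast this
      have hsq : (p:ℤ)^(2*k) ∣ X^2 := by
        have h1 : (p:ℤ)^(2*k) ∣ X^2 + m * (p:ℤ)^(2*k) :=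
          (pow_dvd_pow (p:ℤ) (by omega)).trans hdvd
        have h2 : (p:ℤ)^(2*k) ∣ m * (p:ℤ)^(2*k) := Dvd.intro_left m rfl
        simpa using h1.sub h2
      obtain ⟨U, hU⟩ := pk_dvd_of_sq hp.out k X hsq
      have hUnn : 0 ≤ U := by
        by_contra hneg
        push_neg at hneg
        have : X < 0 := by
          rw [hU]
          exact mul_neg_of_pos_of_neg (by positivity) hneg
        omega
      have hUlt : U < (p:ℤ)^(r+k) := by
        by_contra hcon
        push_neg at hcon
        have : (p:ℤ)^(2*k+r) ≤ X := by
          rw [hU]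
          calc (p:ℤ)^(2*k+r) = (p:ℤ)^k * (p:ℤ)^(r+k) := by rw [← pow_add]; congr 1; omega
          _ ≤ (p:ℤ)^k * U := by
              exact mul_le_mul_of_nonneg_left hcon (by positivity)
        omega
      have hr2 : (p:ℤ)^r ∣ U^2 + m := by
        have : X^2 + m * (p:ℤ)^(2*k) = (p:ℤ)^(2*k) * (U^2 + m) := by
          rw [hU]; ring
        rw [this, hbig2] at hdvd
        exact (mul_dvd_mul_iff_left (a := (p:ℤ)^(2*k)) (by positivity)).mp hdvd
      refine ⟨⟨((U.toNat : ℕ) : ZMod (p^r * p^k)), ?_⟩, ?_⟩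
      · rw [hcast, hPr]
        have hvtn : (((U.toNat : ℕ) : ZMod (p^r * p^k))).val = U.toNat := by
          rw [ZMod.val_natCast, Nat.mod_eq_of_lt]
          rw [hrk]
          have : (U.toNat : ℤ) < ((p^(r+k) : ℕ) : ℤ) := by
            rw [Int.toNat_of_nonneg hUnn]
            exact_mod_cast hUlt
          exact_mod_cast this
        rw [hvtn]
        have h0 : (((U.toNat : ℤ)^2 + m : ℤ) : ZMod (p^r)) = 0 := by
          rw [Int.toNat_of_nonneg hUnn, ZMod.intCast_zmod_eq_zero_iff_dvd]
          exact_mod_cast hr2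
        push_cast at h0 ⊢
        linear_combination h0
      · apply Subtype.ext
        simp only [hΦ]
        have hvtn : (((U.toNat : ℕ) : ZMod (p^r * p^k))).val = U.toNat := by
          rw [ZMod.val_natCast, Nat.mod_eq_of_lt]
          rw [hrk]
          have : (U.toNat : ℤ) < ((p^(r+k) : ℕ) : ℤ) := by
            rw [Int.toNat_of_nonneg hUnn]
            exact_mod_cast hUlt
          exact_mod_cast this
        rw [hvtn]
        have hnat : p^k * U.toNat = x.val := by
          have : ((p^k * U.toNat : ℕ) : ℤ) = ((x.val : ℕ) : ℤ) := by
            push_cast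
            rw [Int.toNat_of_nonneg hUnn, ← hU, hX]
          exact_mod_cast this
        rw [hnat]
        exact ZMod.natCast_rightInverse x
  rw [← Nat.card_congr (Equiv.ofBijective Φ hbij)]
  rw [card_cast_fiber (p^r) (p^k) (by positivity) (by positivity) Pr]
  rw [card_sqrt hp2 m hm r hr]

lemma pow_mul_unit_decomp {p : ℕ} [hp : Fact p.Prime] (t v : ℕ) (hvt : v ≤ t)
    (y : ZMod (p^t)) :
    ∃ N, v ≤ N ∧ N ≤ t ∧ ∃ w : (ZMod (p^t))ˣ,
      (p : ZMod (p^t))^v * y = (p : ZMod (p^t))^N * (w : ZMod (p^t)) := by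
  haveI : NeZero ((p:ℕ)^t) := ⟨pow_ne_zero _ hp.out.ne_zero⟩
  set s := y.val with hs
  by_cases hdvd : p^(t-v) ∣ s
  · refine ⟨t, hvt, le_refl t, 1, ?_⟩
    obtain ⟨s', hs'⟩ := hdvd
    have h1 : (p : ZMod (p^t))^t * ((1 : (ZMod (p^t))ˣ) : ZMod (p^t)) = 0 := by
      have : (((p^t : ℕ)) : ZMod (p^t)) = 0 := ZMod.natCast_self _
      push_cast at this
      rw [this]
      ring
    rw [h1]
    have hy : y = ((s : ℕ) : ZMod (p^t)) := (ZMod.natCast_rightInverse y).symm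
    rw [hy]
    have : ((p:ZMod (p^t)))^v * ((s : ℕ) : ZMod (p^t)) = (((p^v * s : ℕ)) : ZMod (p^t)) := by
      push_cast; ring
    rw [this, ZMod.natCast_eq_zero_iff]
    refine ⟨s', ?_⟩
    rw [hs', ← mul_assoc, ← pow_add]
    congr 2
    omega
  · have hs0 : s ≠ 0 := by
      intro h
      exact hdvd (h ▸ dvd_zero _)
    set a := s.factorization p with ha
    have hproj : p^a ∣ s := Nat.ordProj_dvd s p
    set s' := s / p^a with hs'
    have hcompl : ¬ p ∣ s' := Nat.not_dvd_ordCompl hp.out hs0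
    have hfact : p^a * s' = s := Nat.ordProj_mul_ordCompl_eq_self s p
    have halt : a < t - v := by
      by_contra hcon
      push_neg at hcon
      exact hdvd ((pow_dvd_pow p hcon).trans hproj)
    refine ⟨v + a, Nat.le_add_right v a, by omega, ?_⟩
    have hcop : s'.Coprime (p^t) :=
      Nat.Coprime.pow_right t (((Nat.Prime.coprime_iff_not_dvd hp.out).mpr hcompl).symm)
    refine ⟨ZMod.unitOfCoprime s' hcop, ?_⟩
    rw [ZMod.coe_unitOfCoprime]
    have hy : y = ((s : ℕ) : ZMod (p^t)) := (ZMod.natCast_rightInverse y).symm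
    rw [hy, ← hfact]
    push_cast
    ring

open Classical in

open Classical in

-- n-indexed versions
open Classical in
lemma card_mul_pow' (A B n : ℕ) (hA : 0 < A) (hB : 0 < B) (hn : n = A * B) (c : ZMod n) :
    Nat.card {z : ZMod n // (A : ZMod n) * z = c}
      = if (A : ZMod n) ∣ c then A else 0 := by
  subst hn; exact card_mul_pow A B hA hB c

lemma card_cast_fiber' (A B n : ℕ) (hA : 0 < A) (hB : 0 < B) (hn : n = A * B)
    (h : A ∣ n) (P : ZMod A → Prop) [DecidablePred P] :
    Nat.card {x : ZMod n // P (ZMod.castHom h (ZMod A) x)}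
      = B * Nat.card {a : ZMod A // P a} := by
  subst hn; exact card_cast_fiber A B hA hB P

open Classical in
lemma dvd_iff_cast_zero' (A B n : ℕ) (hA : 0 < A) (hB : 0 < B) (hn : n = A * B)
    (h : A ∣ n) (c : ZMod n) :
    (A : ZMod n) ∣ c ↔ ZMod.castHom h (ZMod A) c = 0 := by
  subst hn; exact dvd_iff_cast_zero A B hA hB c

lemma card_sq_eq' {p : ℕ} [hp : Fact p.Prime] (hp2 : p ≠ 2) (m : ℤ) (hm : ¬ (p:ℤ) ∣ m)
    (k N : ℕ) (hN : 2*k+1 ≤ N) :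
    Nat.card {x : ZMod (p^N) //
        x^2 + (m : ZMod (p^N)) * (p : ZMod (p^N))^(2*k) = 0}
      = p^k * (if legendreSym p (-m) = 1 then 2 else 0) := by
  obtain ⟨r, rfl⟩ : ∃ r, N = 2*k + r := ⟨N - 2*k, by omega⟩
  exact card_sq_eq hp2 m hm k r (by omega)

lemma sum_ite_card {α : Type*} [Fintype α] (Q : α → Prop) [DecidablePred Q] (A : ℕ) :
    (∑ x : α, if Q x then A else 0) = Nat.card {x : α // Q x} * A := by
  rw [← Finset.sum_filter, Finset.sum_const, smul_eq_mul, Nat.card_eq_fintype_card,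
    Fintype.card_subtype]

lemma card_pair {p : ℕ} [hp : Fact p.Prime] (hp2 : p ≠ 2) (m : ℤ) (hm : ¬ (p:ℤ) ∣ m)
    (hleg : legendreSym p (-m) = 1) (k v t : ℕ) (hkv : 2*k+2 ≤ v) (hvt : v ≤ t)
    (y : ZMod (p^t)) :
    Nat.card {xz : ZMod (p^t) × ZMod (p^t) //
        -xz.1^2 - (p : ZMod (p^t))^v * y * xz.2
          = (m : ZMod (p^t)) * (p : ZMod (p^t))^(2*k)}
      = 2 * p^(t+k) := by
  classical
  have hp0 : 0 < p := hp.out.pos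
  haveI : NeZero ((p:ℕ)^t) := ⟨pow_ne_zero _ hp.out.ne_zero⟩
  obtain ⟨N, hvN, hNt, w, hw⟩ := pow_mul_unit_decomp t v hvt y
  have hNsplit : (p:ℕ)^t = p^N * p^(t-N) := by
    rw [← pow_add]; congr 1; omega
  have hdvdN : (p:ℕ)^N ∣ p^t := pow_dvd_pow p hNt
  set c : ZMod (p^t) := (m : ZMod (p^t)) * (p : ZMod (p^t))^(2*k) with hc
  set P₀ : ZMod (p^N) → Prop :=
    fun ξ => ξ^2 + (m : ZMod (p^N)) * (p : ZMod (p^N))^(2*k) = 0 with hP₀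
  -- step 1: condition rewriting
  have e1 : {xz : ZMod (p^t) × ZMod (p^t) //
        -xz.1^2 - (p : ZMod (p^t))^v * y * xz.2 = c}
      ≃ {xz : ZMod (p^t) × ZMod (p^t) //
        ((p^N : ℕ) : ZMod (p^t)) * ((w : ZMod (p^t)) * xz.2) = -xz.1^2 - c} := by
    apply Equiv.subtypeEquivRight
    intro xz
    have hpn : ((p^N : ℕ) : ZMod (p^t)) = (p : ZMod (p^t))^N := by push_cast; ring
    rw [hpn]
    constructor
    · intro h
      calc (p : ZMod (p^t))^N * ((w : ZMod (p^t)) * xz.2)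
          = ((p : ZMod (p^t))^N * (w : ZMod (p^t))) * xz.2 := by ring
      _ = ((p : ZMod (p^t))^v * y) * xz.2 := by rw [← hw]
      _ = -xz.1^2 - c := by linear_combination -h
    · intro h
      have : ((p : ZMod (p^t))^v * y) * xz.2 = -xz.1^2 - c := by
        rw [hw]
        calc ((p : ZMod (p^t))^N * (w : ZMod (p^t))) * xz.2
            = (p : ZMod (p^t))^N * ((w : ZMod (p^t)) * xz.2) := by ring
        _ = -xz.1^2 - c := h
      linear_combination -this
  have e2 : {xz : ZMod (p^t) × ZMod (p^t) //
        ((p^N : ℕ) : ZMod (p^t)) * ((w : ZMod (p^t)) * xz.2) = -xz.1^2 - c}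
      ≃ {xz : ZMod (p^t) × ZMod (p^t) //
        ((p^N : ℕ) : ZMod (p^t)) * xz.2 = -xz.1^2 - c} := by
    refine ⟨fun xz => ⟨(xz.1.1, (w : ZMod (p^t)) * xz.1.2), xz.2⟩,
      fun xz => ⟨(xz.1.1, ((w⁻¹ : (ZMod (p^t))ˣ) : ZMod (p^t)) * xz.1.2), ?_⟩, ?_, ?_⟩
    · simp only
      rw [Units.mul_inv_cancel_left]
      exact xz.2
    · intro xz
      apply Subtype.ext
      apply Prod.ext
      · rfl
      · exact Units.inv_mul_cancel_left w _
    · intro xz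
      apply Subtype.ext
      apply Prod.ext
      · rfl
      · exact Units.mul_inv_cancel_left w _
  have e3 : {xz : ZMod (p^t) × ZMod (p^t) //
        ((p^N : ℕ) : ZMod (p^t)) * xz.2 = -xz.1^2 - c}
      ≃ (x : ZMod (p^t)) × {z : ZMod (p^t) // ((p^N : ℕ) : ZMod (p^t)) * z = -x^2 - c} :=
    Equiv.subtypeProdEquivSigmaSubtype
      (fun x z => ((p^N : ℕ) : ZMod (p^t)) * z = -x^2 - c)
  rw [Nat.card_congr ((e1.trans e2).trans e3), Nat.card_eq_fintype_card,
    Fintype.card_sigma]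
  have hterm : ∀ x : ZMod (p^t),
      Fintype.card {z : ZMod (p^t) // ((p^N : ℕ) : ZMod (p^t)) * z = -x^2 - c}
        = if ((p^N : ℕ) : ZMod (p^t)) ∣ (-x^2 - c) then p^N else 0 := by
    intro x
    rw [← Nat.card_eq_fintype_card]
    convert card_mul_pow' (p^N) (p^(t-N)) (p^t) (by positivity) (by positivity) hNsplit (-x^2 - c)
  have hcond : ∀ x : ZMod (p^t),
      (((p^N : ℕ) : ZMod (p^t)) ∣ (-x^2 - c))
        ↔ P₀ (ZMod.castHom hdvdN (ZMod (p^N)) x) := by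
    intro x
    have h1 : -x^2 - c = -(x^2 + c) := by ring
    rw [h1, dvd_neg,
      dvd_iff_cast_zero' (p^N) (p^(t-N)) (p^t) (by positivity) (by positivity) hNsplit hdvdN]
    have h2 : ZMod.castHom hdvdN (ZMod (p^N)) (x^2 + c)
        = (ZMod.castHom hdvdN (ZMod (p^N)) x)^2
          + (m : ZMod (p^N)) * (p : ZMod (p^N))^(2*k) := by
      rw [hc, map_add, map_pow, map_mul, map_intCast, map_pow, map_natCast]
    rw [h2]
  calc ∑ x : ZMod (p^t), Fintype.card {z : ZMod (p^t) // ((p^N : ℕ) : ZMod (p^t)) * z = -x^2 - c}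
      = ∑ x : ZMod (p^t), if P₀ (ZMod.castHom hdvdN (ZMod (p^N)) x) then p^N else 0 := by
        apply Finset.sum_congr rfl
        intro x _
        rw [hterm x, if_congr (hcond x) rfl rfl]
  _ = Nat.card {x : ZMod (p^t) // P₀ (ZMod.castHom hdvdN (ZMod (p^N)) x)} * p^N :=
        sum_ite_card _ _
  _ = (p^(t-N) * Nat.card {ξ : ZMod (p^N) // P₀ ξ}) * p^N := by
        rw [card_cast_fiber' (p^N) (p^(t-N)) (p^t) (by positivity) (by positivity) hNsplit
          hdvdN P₀]
  _ = (p^(t-N) * (p^k * 2)) * p^N := by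
        rw [hP₀, card_sq_eq' hp2 m hm k N (by omega), if_pos hleg]
  _ = 2 * p^(t+k) := by
        have hh : (p:ℕ)^(t-N) * p^N = p^t := by rw [← pow_add]; congr 1; omega
        have hh2 : (p:ℕ)^t * p^k = p^(t+k) := by rw [← pow_add]
        calc (p:ℕ)^(t-N) * (p^k * 2) * p^N = 2 * ((p:ℕ)^(t-N) * p^N) * p^k := by ring
        _ = 2 * p^t * p^k := by rw [hh]
        _ = 2 * p^(t+k) := by rw [mul_assoc, hh2]

lemma card_total {p : ℕ} [hp : Fact p.Prime] (hp2 : p ≠ 2) (m : ℤ) (hm : ¬ (p:ℤ) ∣ m)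
    (hleg : legendreSym p (-m) = 1) (k v t : ℕ) (hkv : 2*k+2 ≤ v) (hvt : v ≤ t) :
    Nat.card {w : ZMod (p ^ t) × ZMod (p ^ t) × ZMod (p ^ t) //
        -w.1 ^ 2 - (p : ZMod (p ^ t)) ^ v * w.2.1 * w.2.2
          = (m : ZMod (p ^ t)) * (p : ZMod (p ^ t)) ^ (2 * k)}
      = 2 * p^(2*t+k) := by
  haveI : NeZero ((p:ℕ)^t) := ⟨pow_ne_zero _ hp.out.ne_zero⟩
  have e : {w : ZMod (p ^ t) × ZMod (p ^ t) × ZMod (p ^ t) //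
        -w.1 ^ 2 - (p : ZMod (p ^ t)) ^ v * w.2.1 * w.2.2
          = (m : ZMod (p ^ t)) * (p : ZMod (p ^ t)) ^ (2 * k)}
      ≃ (y : ZMod (p^t)) × {xz : ZMod (p^t) × ZMod (p^t) //
          -xz.1^2 - (p : ZMod (p^t))^v * y * xz.2
            = (m : ZMod (p^t)) * (p : ZMod (p^t))^(2*k)} := by
    refine ⟨fun w => ⟨w.1.2.1, ⟨(w.1.1, w.1.2.2), w.2⟩⟩,
      fun s => ⟨(s.2.1.1, s.1, s.2.1.2), s.2.2⟩, fun w => rfl, fun s => rfl⟩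
  rw [Nat.card_congr e, Nat.card_eq_fintype_card, Fintype.card_sigma]
  have hterm : ∀ y : ZMod (p^t),
      Fintype.card {xz : ZMod (p^t) × ZMod (p^t) //
        -xz.1^2 - (p : ZMod (p^t))^v * y * xz.2
          = (m : ZMod (p^t)) * (p : ZMod (p^t))^(2*k)} = 2 * p^(t+k) := by
    intro y
    rw [← Nat.card_eq_fintype_card]
    exact card_pair hp2 m hm hleg k v t hkv hvt y
  calc (∑ y : ZMod (p^t), Fintype.card {xz : ZMod (p^t) × ZMod (p^t) //
        -xz.1^2 - (p : ZMod (p^t))^v * y * xz.2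
          = (m : ZMod (p^t)) * (p : ZMod (p^t))^(2*k)})
      = ∑ _y : ZMod (p^t), 2 * p^(t+k) := Finset.sum_congr rfl (fun y _ => hterm y)
  _ = p^t * (2 * p^(t+k)) := by
      rw [Finset.sum_const, smul_eq_mul, Finset.card_univ, ZMod.card]
  _ = 2 * p^(2*t+k) := by
      have : (p:ℕ)^t * p^(t+k) = p^(2*t+k) := by rw [← pow_add]; congr 1; omega
      calc (p:ℕ)^t * (2 * p^(t+k)) = 2 * ((p:ℕ)^t * p^(t+k)) := by ring
      _ = 2 * p^(2*t+k) := by rw [this]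

end LocalDensityAux


/-- Let `p` be an odd prime, `v` a nonnegative even integer, and `m` with `p ∤ m`.
For `2k < v`, the local density of `−x² − p^v·y·z` at `m·p^(2k)` equals
`p^k·(1 + (−m/p))`, and at `m·p^(2k+1)` with `2k+1 < v` it equals `0`. -/
theorem localDensity_isotropic_low_valuation (p : ℕ) [Fact p.Prime] (hp2 : p ≠ 2)
    (v : ℕ) (hv : Even v) (m : ℤ) (hm : ¬ (p : ℤ) ∣ m) :
    (∀ k : ℕ, 2 * k < v →
      ∃ T : ℕ, ∀ t ≥ T,
        (Nat.card {w : ZMod (p ^ t) × ZMod (p ^ t) × ZMod (p ^ t) //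
            -w.1 ^ 2 - (p : ZMod (p ^ t)) ^ v * w.2.1 * w.2.2
              = (m : ZMod (p ^ t)) * (p : ZMod (p ^ t)) ^ (2 * k)} : ℚ)
            / (p : ℚ) ^ (2 * t)
          = (p : ℚ) ^ k * (1 + (legendreSym p (-m) : ℚ))) ∧
    (∀ k : ℕ, 2 * k + 1 < v →
      ∃ T : ℕ, ∀ t ≥ T,
        (Nat.card {w : ZMod (p ^ t) × ZMod (p ^ t) × ZMod (p ^ t) //
            -w.1 ^ 2 - (p : ZMod (p ^ t)) ^ v * w.2.1 * w.2.2
              = (m : ZMod (p ^ t)) * (p : ZMod (p ^ t)) ^ (2 * k + 1)} : ℚ)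
            / (p : ℚ) ^ (2 * t)
          = 0) := by
  have hp := (inferInstance : Fact p.Prime)
  have hp0 : 0 < p := hp.out.pos
  have hpQ : (p:ℚ) ≠ 0 := by exact_mod_cast hp0.ne'
  have hmp : ((-m : ℤ) : ZMod p) ≠ 0 := by
    intro h
    rw [ZMod.intCast_zmod_eq_zero_iff_dvd] at h
    exact hm (dvd_neg.mp h)
  constructor
  · intro k hk
    have hkv : 2*k + 2 ≤ v := by
      rcases hv with ⟨j, hj⟩
      omega
    refine ⟨v, fun t ht => ?_⟩
    rcases legendreSym.eq_one_or_neg_one p hmp with hleg | hleg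
    · rw [card_total hp2 m hm hleg k v t hkv ht, hleg]
      have hpow : ((2 * p^(2*t+k) : ℕ) : ℚ) = 2 * (p:ℚ)^(2*t) * (p:ℚ)^k := by
        push_cast
        rw [pow_add]
        ring
      rw [hpow]
      rw [div_eq_iff (by positivity)]
      push_cast
      ring
    · -- empty
      have hempty : IsEmpty {w : ZMod (p ^ t) × ZMod (p ^ t) × ZMod (p ^ t) //
          -w.1 ^ 2 - (p : ZMod (p ^ t)) ^ v * w.2.1 * w.2.2
            = (m : ZMod (p ^ t)) * (p : ZMod (p ^ t)) ^ (2 * k)} := by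
        constructor
        rintro ⟨⟨x, y, z⟩, hxyz⟩
        have hdvd : (p:ℕ)^(2*k+2) ∣ p^t := pow_dvd_pow p (by omega)
        set f := ZMod.castHom hdvd (ZMod (p^(2*k+2))) with hf
        have hpv : (p : ZMod (p^(2*k+2)))^v = 0 := by
          have h0 : (p : ZMod (p^(2*k+2)))^(2*k+2) = 0 := by
            have := ZMod.natCast_self (p^(2*k+2))
            push_cast at this
            exact this
          calc (p : ZMod (p^(2*k+2)))^v
              = (p : ZMod (p^(2*k+2)))^(2*k+2) * (p : ZMod (p^(2*k+2)))^(v-(2*k+2)) := by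
                rw [← pow_add]; congr 1; omega
          _ = 0 := by rw [h0, zero_mul]
        have hξ : (f x)^2 + (m : ZMod (p^(2*k+2))) * (p : ZMod (p^(2*k+2)))^(2*k) = 0 := by
          have := congrArg f hxyz
          simp only [map_sub, map_neg, map_mul, map_pow, map_intCast, map_natCast] at this
          rw [hpv] at this
          linear_combination -this
        have hcard := card_sq_eq' hp2 m hm k (2*k+2) (by omega)
        rw [if_neg (by rw [hleg]; norm_num)] at hcard
        have : IsEmpty {x : ZMod (p^(2*k+2)) //
            x^2 + (m : ZMod (p^(2*k+2))) * (p : ZMod (p^(2*k+2)))^(2*k) = 0} := by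
          rw [Nat.card_eq_fintype_card] at hcard
          exact Fintype.card_eq_zero_iff.mp (by omega)
        exact this.false ⟨f x, hξ⟩
      simp only [Nat.card_of_isEmpty, Nat.cast_zero, zero_div]
      rw [hleg]
      push_cast
      ring
  · intro k hk
    refine ⟨v, fun t ht => ?_⟩
    have hempty : IsEmpty {w : ZMod (p ^ t) × ZMod (p ^ t) × ZMod (p ^ t) //
        -w.1 ^ 2 - (p : ZMod (p ^ t)) ^ v * w.2.1 * w.2.2
          = (m : ZMod (p ^ t)) * (p : ZMod (p ^ t)) ^ (2 * k + 1)} := by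
      constructor
      rintro ⟨⟨x, y, z⟩, hxyz⟩
      have hdvd : (p:ℕ)^(2*k+2) ∣ p^t := pow_dvd_pow p (by omega)
      set f := ZMod.castHom hdvd (ZMod (p^(2*k+2))) with hf
      have hpv : (p : ZMod (p^(2*k+2)))^v = 0 := by
        have h0 : (p : ZMod (p^(2*k+2)))^(2*k+2) = 0 := by
          have := ZMod.natCast_self (p^(2*k+2))
          push_cast at this
          exact this
        calc (p : ZMod (p^(2*k+2)))^v
            = (p : ZMod (p^(2*k+2)))^(2*k+2) * (p : ZMod (p^(2*k+2)))^(v-(2*k+2)) := by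
              rw [← pow_add]; congr 1; omega
        _ = 0 := by rw [h0, zero_mul]
      have hξ : (f x)^2 + (m : ZMod (p^(2*k+2))) * (p : ZMod (p^(2*k+2)))^(2*k+1) = 0 := by
        have := congrArg f hxyz
        simp only [map_sub, map_neg, map_mul, map_pow, map_intCast, map_natCast] at this
        rw [hpv] at this
        linear_combination -this
      haveI : NeZero ((p:ℕ)^(2*k+2)) := ⟨pow_ne_zero _ hp.out.ne_zero⟩
      set X : ℤ := ((f x).val : ℤ) with hX
      have hXdvd : (p:ℤ)^(2*k+2) ∣ X^2 + m * (p:ℤ)^(2*k+1) := by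
        have h0 : ((X^2 + m * (p:ℤ)^(2*k+1) : ℤ) : ZMod (p^(2*k+2))) = 0 := by
          push_cast
          rw [hX]
          push_cast
          rw [ZMod.natCast_val, ZMod.cast_id]
          linear_combination hξ
        have := (ZMod.intCast_zmod_eq_zero_iff_dvd _ _).mp h0
        exact_mod_cast this
      have hsq : (p:ℤ)^(2*k+1) ∣ X^2 := by
        have h1 : (p:ℤ)^(2*k+1) ∣ X^2 + m * (p:ℤ)^(2*k+1) :=
          (pow_dvd_pow (p:ℤ) (by omega)).trans hXdvd
        have h2 : (p:ℤ)^(2*k+1) ∣ m * (p:ℤ)^(2*k+1) := Dvd.intro_left m rfl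
        simpa using h1.sub h2
      obtain ⟨Y, hY⟩ := pk1_dvd_of_sq hp.out k X hsq
      have hsq2 : (p:ℤ)^(2*k+2) ∣ X^2 := by
        refine ⟨Y^2, ?_⟩
        rw [hY]
        ring
      have hmdvd : (p:ℤ)^(2*k+2) ∣ m * (p:ℤ)^(2*k+1) := by
        have := hXdvd.sub hsq2
        simpa using this
      apply hm
      have h3 : (p:ℤ)^(2*k+1) * (p:ℤ) ∣ (p:ℤ)^(2*k+1) * m := by
        have e1 : (p:ℤ)^(2*k+1) * (p:ℤ) = (p:ℤ)^(2*k+2) := by rw [← pow_succ]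
        have e2 : (p:ℤ)^(2*k+1) * m = m * (p:ℤ)^(2*k+1) := by ring
        rw [e1, e2]
        exact hmdvd
      exact (mul_dvd_mul_iff_left (a := (p:ℤ)^(2*k+1)) (by positivity)).mp h3
    simp only [Nat.card_of_isEmpty, Nat.cast_zero, zero_div]
end

section
/- Let p be an odd prime. For every sufficiently large t, (1/p^{2t}) times the number of triples (x,y,z) modulo p^t with −x² − p·y·z ≡ p·m (mod p^t), where p ∤ m, equals 1 − 1/p. -/
lemma zmod_pow_mul_cast_eq (p k j n : ℕ) (hn : n = k + j) (a b : ℤ)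
    (h : ((a : ℤ) : ZMod (p ^ j)) = (b : ZMod (p ^ j))) :
    ((p ^ k * a : ℤ) : ZMod (p ^ n)) = ((p ^ k * b : ℤ) : ZMod (p ^ n)) := by
  subst hn
  rw [← sub_eq_zero, ← Int.cast_sub, ZMod.intCast_zmod_eq_zero_iff_dvd] at h ⊢
  have key : (p : ℤ) ^ k * a - p ^ k * b = p ^ k * (a - b) := by ring
  rw [key]
  push_cast [pow_add]
  exact mul_dvd_mul_left _ (by exact_mod_cast h)

lemma zmod_pow_mul_cast_cancel (p k j n : ℕ) (hp : p ≠ 0) (hn : n = k + j) (a b : ℤ)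
    (h : ((p ^ k * a : ℤ) : ZMod (p ^ n)) = ((p ^ k * b : ℤ) : ZMod (p ^ n))) :
    ((a : ℤ) : ZMod (p ^ j)) = (b : ZMod (p ^ j)) := by
  subst hn
  rw [← sub_eq_zero, ← Int.cast_sub, ZMod.intCast_zmod_eq_zero_iff_dvd] at h ⊢
  have key : (p : ℤ) ^ k * a - p ^ k * b = p ^ k * (a - b) := by ring
  rw [key] at h
  rw [show ((p ^ (k + j) : ℕ) : ℤ) = (p : ℤ) ^ k * (p : ℤ) ^ j by push_cast [pow_add]; ring] at h
  have h2 := (mul_dvd_mul_iff_left (pow_ne_zero k (by exact_mod_cast hp : (p:ℤ) ≠ 0))).mp h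
  exact_mod_cast h2

lemma localDensity_key_card (p : ℕ) [Fact p.Prime] (m : ℤ) (hm : ¬ (p : ℤ) ∣ m) (s : ℕ) :
    Nat.card {w : ZMod (p ^ (s+2)) × ZMod (p ^ (s+2)) × ZMod (p ^ (s+2)) //
        -w.1 ^ 2 - (p : ZMod (p ^ (s+2))) * w.2.1 * w.2.2
          = (p : ZMod (p ^ (s+2))) * (m : ZMod (p ^ (s+2)))}
      = p ^ (s+1) * (p ^ (s+1) * (p - 1)) * p := by
  have hp : p.Prime := Fact.out
  have hp0 : p ≠ 0 := hp.pos.ne'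
  haveI : NeZero (p ^ (s+2)) := ⟨pow_ne_zero _ hp0⟩
  haveI : NeZero (p ^ (s+1)) := ⟨pow_ne_zero _ hp0⟩
  set R := ZMod (p ^ (s+2)) with hR
  set S := {w : R × R × R //
      -w.1 ^ 2 - (p : R) * w.2.1 * w.2.2 = (p : R) * (m : R)} with hS
  have h0 : (p : R) * (p : R) ^ (s+1) = 0 := by
    have : ((p ^ (s+2) : ℕ) : R) = 0 := by exact_mod_cast ZMod.natCast_self _
    push_cast at this
    rw [show (p : R) * (p : R) ^ (s+1) = (p : R) ^ (s+2) by ring, this]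
  -- the parametrization
  let Φ : ZMod (p ^ (s+1)) × Rˣ × ZMod p → S := fun w =>
    ⟨((p : R) * (w.1.val : R), ((w.2.1 : R), (↑(w.2.1⁻¹) : R) * (-(m : R) - (p : R) * (w.1.val : R) ^ 2)
        + (p : R) ^ (s+1) * (w.2.2.val : R))), by
      have h1 : (w.2.1 : R) * (↑(w.2.1⁻¹) : R) = 1 := w.2.1.mul_inv
      show -((p : R) * (w.1.val : R)) ^ 2 - (p : R) * (w.2.1 : R) * _ = (p : R) * (m : R)
      linear_combination (-(p : R) * (-(m : R) - (p : R) * (w.1.val : R) ^ 2)) * h1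
        + (-(w.2.1 : R) * (w.2.2.val : R)) * h0⟩
  have hbij : Function.Bijective Φ := by
    constructor
    · rintro ⟨u, y, e⟩ ⟨u', y', e'⟩ hab
      have hab' := congrArg Subtype.val hab
      simp only [Φ, Prod.ext_iff] at hab'
      obtain ⟨h1, h2, h3⟩ := hab'
      have hy : y = y' := Units.ext h2
      have hu : u = u' := by
        have := zmod_pow_mul_cast_cancel p 1 (s+1) (s+2) hp0 (by omega) (u.val) (u'.val)
          (by simp only [pow_one, Int.cast_mul, Int.cast_natCast]; exact h1)
        have h' : ((u.val : ℕ) : ZMod (p ^ (s+1))) = ((u'.val : ℕ) : ZMod (p ^ (s+1))) := by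
          exact_mod_cast this
        rwa [ZMod.natCast_val, ZMod.cast_id, ZMod.natCast_val, ZMod.cast_id] at h'
      subst hy; subst hu
      have h3' : (p : R) ^ (s+1) * (e.val : R) = (p : R) ^ (s+1) * (e'.val : R) :=
        by exact add_left_cancel h3
      have he : e = e' := by
        have := zmod_pow_mul_cast_cancel p (s+1) 1 (s+2) hp0 (by omega) (e.val) (e'.val)
          (by push_cast; exact_mod_cast h3')
        have h' : ((e.val : ℕ) : ZMod (p ^ 1)) = ((e'.val : ℕ) : ZMod (p ^ 1)) := by
          exact_mod_cast this
        rw [pow_one] at h'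
        rwa [ZMod.natCast_val, ZMod.cast_id, ZMod.natCast_val, ZMod.cast_id] at h'
      rw [he]
    · rintro ⟨⟨x, y, z⟩, hw⟩
      have ex : ((x.val : ℕ) : R) = x := by rw [ZMod.natCast_val, ZMod.cast_id]
      have ey : ((y.val : ℕ) : R) = y := by rw [ZMod.natCast_val, ZMod.cast_id]
      have ez : ((z.val : ℕ) : R) = z := by rw [ZMod.natCast_val, ZMod.cast_id]
      set X : ℤ := (x.val : ℤ) with hX
      set Y : ℤ := (y.val : ℤ) with hY
      set Z : ℤ := (z.val : ℤ) with hZ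
      have hdvd : ((p ^ (s+2) : ℕ) : ℤ) ∣ (X^2 + p*Y*Z + p*m) := by
        rw [← ZMod.intCast_zmod_eq_zero_iff_dvd]
        push_cast [hX, hY, hZ, ex, ey, ez]
        linear_combination -hw
      have hdvd' : (p : ℤ) ^ (s+2) ∣ (X^2 + p*Y*Z + p*m) := by exact_mod_cast hdvd
      have hpZ : Prime (p : ℤ) := Nat.prime_iff_prime_int.mp hp
      have hpX : (p : ℤ) ∣ X := by
        apply hpZ.dvd_of_dvd_pow (n := 2)
        have h' : (p : ℤ) ∣ X^2 + p*Y*Z + p*m :=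
          dvd_trans (dvd_pow_self (p:ℤ) (Nat.succ_ne_zero _)) hdvd'
        have hx2 : X^2 = (X^2 + p*Y*Z + p*m) - p*(Y*Z + m) := by ring
        rw [hx2]
        exact dvd_sub h' ⟨Y*Z + m, by ring⟩
      obtain ⟨A, hA⟩ := hpX
      have hdvd2 : (p : ℤ) ^ (s+1) ∣ (p*A^2 + Y*Z + m) := by
        have h' : (p:ℤ) * ((p:ℤ)^(s+1)) ∣ (p:ℤ) * (p*A^2 + Y*Z + m) := by
          rw [show (p:ℤ) * (p*A^2 + Y*Z + m) = X^2 + p*Y*Z + p*m by rw [hA]; ring,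
            ← pow_succ']
          exact hdvd'
        exact (mul_dvd_mul_iff_left (by exact_mod_cast hp0 : (p:ℤ) ≠ 0)).mp h'
      -- y is a unit
      have hpy : ¬ (p : ℤ) ∣ Y := by
        intro hY'
        apply hm
        have h1 : (p : ℤ) ∣ (p*A^2 + Y*Z + m) :=
          dvd_trans (dvd_pow_self (p:ℤ) (Nat.succ_ne_zero _)) hdvd2
        have : (m : ℤ) = (p*A^2 + Y*Z + m) - p*A^2 - Y*Z := by ring
        rw [this]
        exact dvd_sub (dvd_sub h1 ⟨A^2, by ring⟩) (Dvd.dvd.mul_right hY' Z)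
      have hyu : IsUnit y := by
        rw [← ey, ZMod.isUnit_iff_coprime]
        apply Nat.Coprime.pow_right
        rw [Nat.coprime_comm]
        rw [hp.coprime_iff_not_dvd]
        intro hdvdY
        exact hpy (Int.natCast_dvd_natCast.mpr hdvdY)
      obtain ⟨K, hK⟩ := hdvd2
      set u : ZMod (p ^ (s+1)) := ((A : ℤ) : ZMod (p ^ (s+1))) with hu
      have huA : ((u.val : ℤ) : ZMod (p ^ (s+1))) = ((A : ℤ) : ZMod (p ^ (s+1))) := by
        rw [hu]; push_cast
        rw [ZMod.natCast_val, ZMod.cast_id]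
      set Yu : Rˣ := hyu.unit with hYu
      have hYuy : (Yu : R) = y := hyu.unit_spec
      set c : R := (↑(Yu⁻¹) : R) * ((K : ℤ) : R) with hc
      set ε : ZMod p := ZMod.castHom (dvd_pow_self p (Nat.succ_ne_zero (s+1))) (ZMod p) c with hε
      -- first component
      have comp1 : (p : R) * ((u.val : ℕ) : R) = x := by
        have := zmod_pow_mul_cast_eq p 1 (s+1) (s+2) (by omega) (u.val) A huA
        push_cast [pow_one] at this
        rw [this, show (p : R) * ((A : ℤ) : R) = ((p * A : ℤ) : R) by exact (show (p : ZMod (p^(s+2))) * ((A : ℤ) : ZMod (p^(s+2))) = (((p:ℤ) * A : ℤ) : ZMod (p^(s+2))) by push_cast; ring),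
          ← hA, hX]
        exact_mod_cast ex
      -- the key congruence for the third component
      have hyz : y * z + (m : R) + (p : R) * ((u.val : ℕ) : R) ^ 2
          = (p : R) ^ (s+1) * ((K : ℤ) : R) := by
        have hsq : ((u.val ^ 2 : ℤ) : ZMod (p ^ (s+1))) = ((A ^ 2 : ℤ) : ZMod (p ^ (s+1))) := by
          push_cast
          rw [show (((u.val : ℕ) : ZMod (p^(s+1)))) = (((u.val : ℤ)) : ZMod (p^(s+1))) by push_cast; rfl]
          rw [huA]
        have hstep := zmod_pow_mul_cast_eq p 1 (s+1) (s+2) (by omega) (u.val ^ 2) (A ^ 2) hsq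
        have hKR : ((Y*Z + m + p*A^2 : ℤ) : R) = (p : R) ^ (s+1) * ((K : ℤ) : R) := by
          rw [show (Y*Z + m + p*A^2 : ℤ) = (p:ℤ)^(s+1) * K by rw [← hK]; ring]
          exact (show (((p:ℤ)^(s+1) * K : ℤ) : ZMod (p^(s+2))) = (p : ZMod (p^(s+2)))^(s+1) * ((K:ℤ) : ZMod (p^(s+2))) by push_cast; ring)
        simp only [R] at hstep hKR ⊢
        push_cast [pow_one, hX, hY, hZ, ex, ey, ez] at hstep hKR ⊢
        linear_combination hKR + hstep
      -- relate ε back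
      have hεc : (p : R) ^ (s+1) * ((ε.val : ℕ) : R) = (p : R) ^ (s+1) * c := by
        have hεv : ((ε.val : ℤ) : ZMod (p ^ 1)) = ((c.val : ℤ) : ZMod (p ^ 1)) := by
          rw [pow_one]
          push_cast
          rw [ZMod.natCast_val, ZMod.cast_id, hε, ZMod.castHom_apply, ← ZMod.natCast_val]
        have := zmod_pow_mul_cast_eq p (s+1) 1 (s+2) (by omega) (ε.val) (c.val) hεv
        push_cast at this
        rw [this, ZMod.natCast_val, ZMod.cast_id]
      refine ⟨⟨u, Yu, ε⟩, ?_⟩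
      apply Subtype.ext
      show ((p : R) * ((u.val : ℕ) : R), ((Yu : R), _)) = (x, y, z)
      refine Prod.ext comp1 (Prod.ext hYuy ?_)
      show (↑(Yu⁻¹) : R) * (-(m : R) - (p : R) * ((u.val : ℕ) : R) ^ 2)
          + (p : R) ^ (s+1) * ((ε.val : ℕ) : R) = z
      have hinv : y * (↑(Yu⁻¹) : R) = 1 := by rw [← hYuy]; exact Yu.mul_inv
      have h3 : y * ((↑(Yu⁻¹) : R) * (-(m : R) - (p : R) * ((u.val : ℕ) : R) ^ 2)
          + (p : R) ^ (s+1) * ((ε.val : ℕ) : R)) = y * z := by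
        rw [hεc, hc]
        linear_combination (-(m : R) - (p : R) * ((u.val : ℕ) : R) ^ 2
          + (p : R) ^ (s+1) * ((K : ℤ) : R)) * hinv - hyz
      have := congrArg (fun w => (↑(Yu⁻¹) : R) * w) h3
      simpa [← mul_assoc, mul_comm ((↑(Yu⁻¹) : R)) y, hinv, one_mul] using this
  have hcard := Nat.card_congr (Equiv.ofBijective Φ hbij)
  rw [← hcard]
  have hunits : Nat.card Rˣ = p ^ (s+1) * (p - 1) := by
    show Nat.card (ZMod (p ^ (s+2)))ˣ = _
    rw [Nat.card_eq_fintype_card, ZMod.card_units_eq_totient,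
      Nat.totient_prime_pow hp (Nat.succ_pos _)]
    rfl
  rw [Nat.card_prod, Nat.card_prod, Nat.card_zmod, Nat.card_zmod, hunits]
  ring

/-- Let `p` be an odd prime and `m` with `p ∤ m`. For every sufficiently large `t`,
`(1/p^(2t))` times the number of triples `(x,y,z)` modulo `p^t` with
`−x² − p·y·z ≡ p·m (mod p^t)` equals `1 − 1/p`. -/
theorem localDensity_isotropic_p_at_pm (p : ℕ) [Fact p.Prime] (hp2 : p ≠ 2)
    (m : ℤ) (hm : ¬ (p : ℤ) ∣ m) :
    ∃ T : ℕ, ∀ t ≥ T,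
      (Nat.card {w : ZMod (p ^ t) × ZMod (p ^ t) × ZMod (p ^ t) //
          -w.1 ^ 2 - (p : ZMod (p ^ t)) * w.2.1 * w.2.2
            = (p : ZMod (p ^ t)) * (m : ZMod (p ^ t))} : ℚ)
          / (p : ℚ) ^ (2 * t)
        = 1 - 1 / p := by
  have hp : p.Prime := Fact.out
  refine ⟨2, fun t ht => ?_⟩
  obtain ⟨s, rfl⟩ : ∃ s, t = s + 2 := ⟨t - 2, by omega⟩
  rw [localDensity_key_card p m hm s]
  have hp0 : (p : ℚ) ≠ 0 := by exact_mod_cast hp.pos.ne'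
  have hp1 : 1 ≤ p := hp.one_lt.le
  have hcast : ((p ^ (s+1) * (p ^ (s+1) * (p - 1)) * p : ℕ) : ℚ)
      = (p : ℚ) ^ (s+1) * ((p : ℚ) ^ (s+1) * ((p : ℚ) - 1)) * (p : ℚ) := by
    push_cast [Nat.cast_sub hp1]
    ring
  rw [hcast]
  field_simp
  ring
end

section
/- Let p be an odd prime and m with p ∤ m. The local density of −x² − p·y·z at m equals 1 + (−m/p), where (−m/p) is the Legendre symbol. -/
lemma hensel_sqrt (p : ℕ) [hp : Fact p.Prime] (hp2 : p ≠ 2) (a : ℤ)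
    (ha : ¬ (p : ℤ) ∣ a) (hsq : IsSquare (a : ZMod p)) :
    ∀ t : ℕ, ∃ R : ℤ, (p : ℤ) ^ (t + 1) ∣ R ^ 2 - a := by
  have hpZ : Prime (p : ℤ) := Nat.prime_iff_prime_int.mp hp.out
  intro t
  induction t with
  | zero =>
    obtain ⟨b, hb⟩ := hsq
    refine ⟨(b.val : ℤ), ?_⟩
    rw [pow_one, ← ZMod.intCast_zmod_eq_zero_iff_dvd]
    push_cast
    simp [ZMod.natCast_val, ZMod.cast_id, hb]
    ring
  | succ t ih =>
    obtain ⟨R, c, hc⟩ := ih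
    have hpR : ¬ (p : ℤ) ∣ R := by
      intro hdvd
      apply ha
      have h1 : (p : ℤ) ∣ R ^ 2 - a := dvd_trans (dvd_pow_self _ (Nat.succ_ne_zero t)) ⟨c, hc⟩
      have h2 : (p : ℤ) ∣ R ^ 2 := by rw [sq]; exact hdvd.mul_right R
      have := dvd_sub h2 h1
      simpa using this
    have h2R : (2 * (R : ZMod p) : ZMod p) ≠ 0 := by
      have : ¬ (p : ℤ) ∣ 2 * R := by
        intro hdvd
        rcases hpZ.dvd_mul.mp hdvd with h | h
        · have h2 : p ∣ 2 := by exact_mod_cast h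
          have := Nat.le_of_dvd (by norm_num) h2
          have := hp.out.two_le
          omega
        · exact hpR h
      rw [← ZMod.intCast_zmod_eq_zero_iff_dvd] at this
      push_cast at this
      exact this
    obtain ⟨s, hs⟩ : ∃ s : ℤ, (p : ℤ) ∣ 2 * R * s - 1 := by
      refine ⟨(((2 * (R : ZMod p)))⁻¹.val : ℤ), ?_⟩
      rw [← ZMod.intCast_zmod_eq_zero_iff_dvd]
      push_cast
      rw [ZMod.natCast_val, ZMod.cast_id, mul_inv_cancel₀ h2R]
      ring
    obtain ⟨d, hd⟩ := hs
    refine ⟨R - c * s * (p : ℤ) ^ (t + 1), -(c * d) + c ^ 2 * s ^ 2 * (p : ℤ) ^ t, ?_⟩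
    linear_combination hc + (-(c) * (p : ℤ) ^ (t + 1)) * hd

lemma sq_one (p : ℕ) [hp : Fact p.Prime] (hp2 : p ≠ 2) (t : ℕ) (ht : 1 ≤ t)
    [NeZero (p ^ t)] (s : ZMod (p ^ t)) : s ^ 2 = 1 ↔ s = 1 ∨ s = -1 := by
  have hpZ : Prime (p : ℤ) := Nat.prime_iff_prime_int.mp hp.out
  constructor
  · intro h
    set n : ℤ := (s.val : ℤ) with hn
    have hsn : ((n : ℤ) : ZMod (p ^ t)) = s := by
      push_cast [hn]
      simp [ZMod.natCast_val, ZMod.cast_id]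
    have hdvd : ((p : ℤ)) ^ t ∣ (n - 1) * (n + 1) := by
      have : ((n ^ 2 - 1 : ℤ) : ZMod (p ^ t)) = 0 := by push_cast [hsn]; rw [h]; ring
      rw [ZMod.intCast_zmod_eq_zero_iff_dvd] at this
      push_cast at this
      convert this using 1
      ring
    have hnot : ¬ ((p : ℤ) ∣ n - 1 ∧ (p : ℤ) ∣ n + 1) := by
      rintro ⟨h1, h2⟩
      have : (p : ℤ) ∣ 2 := by have := dvd_sub h2 h1; simpa using this
      have h2' : p ∣ 2 := by exact_mod_cast this
      have := Nat.le_of_dvd (by norm_num) h2'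
      have := hp.out.two_le
      omega
    rcases not_and_or.mp hnot with hnd | hnd
    · right
      have hcop : IsCoprime ((p : ℤ) ^ t) (n - 1) :=
        (hpZ.coprime_iff_not_dvd.mpr hnd).pow_left
      have : ((p : ℤ)) ^ t ∣ n + 1 := hcop.dvd_of_dvd_mul_left hdvd
      have : ((n + 1 : ℤ) : ZMod (p ^ t)) = 0 := by
        rw [ZMod.intCast_zmod_eq_zero_iff_dvd]; exact_mod_cast this
      push_cast at this
      rw [hsn] at this
      exact eq_neg_of_add_eq_zero_left this
    · left
      have hcop : IsCoprime ((p : ℤ) ^ t) (n + 1) :=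
        (hpZ.coprime_iff_not_dvd.mpr hnd).pow_left
      have : ((p : ℤ)) ^ t ∣ n - 1 := hcop.dvd_of_dvd_mul_right hdvd
      have : ((n - 1 : ℤ) : ZMod (p ^ t)) = 0 := by
        rw [ZMod.intCast_zmod_eq_zero_iff_dvd]; exact_mod_cast this
      push_cast at this
      rw [hsn] at this
      exact sub_eq_zero.mp this
  · rintro (rfl | rfl) <;> ring

lemma card_sqrt_s10 (p : ℕ) [hp : Fact p.Prime] (hp2 : p ≠ 2) (t : ℕ) (ht : 1 ≤ t)
    [NeZero (p ^ t)] (u : ZMod (p ^ t)) (r : ZMod (p ^ t)) (hr : r ^ 2 = u)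
    (hru : IsUnit r) :
    Nat.card {x : ZMod (p ^ t) // x ^ 2 = u} = 2 := by
  have hpt3 : Fact (2 < p ^ t) := by
    constructor
    have h3 : 3 ≤ p := by have := hp.out.two_le; omega
    calc 2 < 3 := by norm_num
    _ ≤ p := h3
    _ = p ^ 1 := (pow_one p).symm
    _ ≤ p ^ t := Nat.pow_le_pow_right (by omega) ht
  obtain ⟨ru, hru'⟩ := hru
  have e : {x : ZMod (p ^ t) // x ^ 2 = u} ≃ {s : ZMod (p ^ t) // s ^ 2 = 1} := by
    refine (Units.mulRight (ru⁻¹ : (ZMod (p ^ t))ˣ)).subtypeEquiv fun x => ?_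
    have hiff : ∀ y : ZMod (p ^ t), (Units.mulRight ru⁻¹ y) ^ 2 = y ^ 2 * ((ru ^ 2)⁻¹ : (ZMod (p ^ t))ˣ) := by
      intro y
      simp only [Units.mulRight_apply, mul_pow]
      rw [← Units.val_pow_eq_pow_val, inv_pow]
    rw [hiff, Units.mul_inv_eq_one]
    have : ((ru ^ 2 : (ZMod (p ^ t))ˣ) : ZMod (p ^ t)) = u := by
      rw [Units.val_pow_eq_pow_val, hru', hr]
    rw [this]
  rw [Nat.card_congr e]
  have hset : {s : ZMod (p ^ t) | s ^ 2 = 1} = {1, -1} := by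
    ext s
    simp [sq_one p hp2 t ht s]
  calc Nat.card {s : ZMod (p ^ t) // s ^ 2 = 1}
      = Set.ncard {s : ZMod (p ^ t) | s ^ 2 = 1} := Nat.card_coe_set_eq _
    _ = 2 := by rw [hset]; exact Set.ncard_pair (by
        intro h1
        exact ZMod.neg_one_ne_one h1.symm)

lemma fiber_card (p : ℕ) [hp : Fact p.Prime] (hp2 : p ≠ 2) (t : ℕ) (ht : 1 ≤ t)
    [NeZero (p ^ t)] (u : ZMod (p ^ t)) (hdvd : p ∣ p ^ t)
    (h0 : (ZMod.castHom hdvd (ZMod p)) u ≠ 0)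
    (hsq : IsSquare ((ZMod.castHom hdvd (ZMod p)) u)) :
    Nat.card {x : ZMod (p ^ t) // x ^ 2 = u} = 2 := by
  set a : ℤ := (u.val : ℤ) with ha
  have hcast : ((a : ℤ) : ZMod p) = (ZMod.castHom hdvd (ZMod p)) u := by
    rw [ha]
    push_cast
    rw [ZMod.natCast_val, ZMod.castHom_apply]
  have hnd : ¬ (p : ℤ) ∣ a := by
    intro h
    apply h0
    rw [← hcast, ZMod.intCast_zmod_eq_zero_iff_dvd]
    exact h
  have hsq' : IsSquare ((a : ℤ) : ZMod p) := by rw [hcast]; exact hsq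
  obtain ⟨t', rfl⟩ : ∃ t', t = t' + 1 := ⟨t - 1, by omega⟩
  obtain ⟨R, hR⟩ := hensel_sqrt p hp2 a hnd hsq' t'
  have hr : ((R : ℤ) : ZMod (p ^ (t' + 1))) ^ 2 = u := by
    have : ((R ^ 2 - a : ℤ) : ZMod (p ^ (t' + 1))) = 0 := by
      rw [ZMod.intCast_zmod_eq_zero_iff_dvd]
      exact_mod_cast hR
    push_cast at this
    have h2 : ((R : ℤ) : ZMod (p ^ (t' + 1))) ^ 2 = ((a : ℤ) : ZMod (p ^ (t' + 1))) := by
      linear_combination this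
    rw [h2, ha]
    push_cast
    rw [ZMod.natCast_val, ZMod.cast_id]
  have hu : IsUnit u := by
    have hpu : ¬ p ∣ u.val := by
      intro h
      apply h0
      rw [← hcast, ha, ZMod.intCast_zmod_eq_zero_iff_dvd]
      exact_mod_cast h
    have hco : Nat.Coprime u.val (p ^ (t' + 1)) :=
      Nat.Coprime.pow_right _ (Nat.coprime_comm.mp (hp.out.coprime_iff_not_dvd.mpr hpu))
    have := (ZMod.isUnit_iff_coprime u.val (p ^ (t' + 1))).mpr hco
    rwa [ZMod.natCast_val, ZMod.cast_id] at this
  have hrunit : IsUnit ((R : ℤ) : ZMod (p ^ (t' + 1))) := by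
    have : IsUnit (((R : ℤ) : ZMod (p ^ (t' + 1))) * ((R : ℤ) : ZMod (p ^ (t' + 1)))) := by
      rw [← sq, hr]; exact hu
    exact isUnit_of_mul_isUnit_left this
  exact card_sqrt_s10 p hp2 (t' + 1) (by omega) u _ hr hrunit


/-- Let `p` be an odd prime and `m` with `p ∤ m`. The local density of
`−x² − p·y·z` at `m` equals `1 + (−m/p)`. -/
theorem localDensity_isotropic_p_at_unit (p : ℕ) [Fact p.Prime] (hp2 : p ≠ 2)
    (m : ℤ) (hm : ¬ (p : ℤ) ∣ m) :
    ∃ T : ℕ, ∀ t ≥ T,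
      (Nat.card {w : ZMod (p ^ t) × ZMod (p ^ t) × ZMod (p ^ t) //
          -w.1 ^ 2 - (p : ZMod (p ^ t)) * w.2.1 * w.2.2 = (m : ZMod (p ^ t))} : ℚ)
          / (p : ℚ) ^ (2 * t)
        = 1 + (legendreSym p (-m) : ℚ) := by
  have hp : Fact p.Prime := ‹_›
  refine ⟨1, fun t ht => ?_⟩
  haveI : NeZero (p ^ t) := ⟨pow_ne_zero t hp.out.ne_zero⟩
  have hdvd : p ∣ p ^ t := dvd_pow_self p (by omega)
  have hm0 : ((-m : ℤ) : ZMod p) ≠ 0 := by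
    rw [Ne, ZMod.intCast_zmod_eq_zero_iff_dvd]
    simpa using hm
  have hppos : (0 : ℚ) < (p : ℚ) := by exact_mod_cast hp.out.pos
  rcases legendreSym.eq_one_or_neg_one p hm0 with h1 | h1
  · -- Legendre symbol is 1
    have hsq : IsSquare ((-m : ℤ) : ZMod p) := (legendreSym.eq_one_iff p hm0).mp h1
    have e : {w : ZMod (p ^ t) × ZMod (p ^ t) × ZMod (p ^ t) //
          -w.1 ^ 2 - (p : ZMod (p ^ t)) * w.2.1 * w.2.2 = (m : ZMod (p ^ t))} ≃
        Σ yz : ZMod (p ^ t) × ZMod (p ^ t),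
          {x : ZMod (p ^ t) //
            x ^ 2 = -(m : ZMod (p ^ t)) - (p : ZMod (p ^ t)) * yz.1 * yz.2} :=
      { toFun := fun w => ⟨(w.1.2.1, w.1.2.2), ⟨w.1.1, by linear_combination -w.2⟩⟩
        invFun := fun s => ⟨(s.2.1, s.1.1, s.1.2), by linear_combination -s.2.2⟩
        left_inv := fun w => rfl
        right_inv := fun s => rfl }
    have hfib : ∀ yz : ZMod (p ^ t) × ZMod (p ^ t),
        Nat.card {x : ZMod (p ^ t) //
          x ^ 2 = -(m : ZMod (p ^ t)) - (p : ZMod (p ^ t)) * yz.1 * yz.2} = 2 := by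
      intro yz
      have hchm : (ZMod.castHom hdvd (ZMod p))
          (-(m : ZMod (p ^ t)) - (p : ZMod (p ^ t)) * yz.1 * yz.2) = ((-m : ℤ) : ZMod p) := by
        push_cast
        simp [map_sub, map_neg, map_mul, map_intCast, map_natCast, ZMod.natCast_self]
      refine fiber_card p hp2 t ht _ hdvd ?_ ?_
      · rw [hchm]; exact hm0
      · rw [hchm]; exact hsq
    have hcard : Nat.card {w : ZMod (p ^ t) × ZMod (p ^ t) × ZMod (p ^ t) //
          -w.1 ^ 2 - (p : ZMod (p ^ t)) * w.2.1 * w.2.2 = (m : ZMod (p ^ t))}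
        = p ^ t * p ^ t * 2 := by
      rw [Nat.card_congr e, Nat.card_eq_fintype_card, Fintype.card_sigma]
      have : ∀ yz : ZMod (p ^ t) × ZMod (p ^ t),
          Fintype.card {x : ZMod (p ^ t) //
            x ^ 2 = -(m : ZMod (p ^ t)) - (p : ZMod (p ^ t)) * yz.1 * yz.2} = 2 := by
        intro yz
        rw [← Nat.card_eq_fintype_card]
        exact hfib yz
      simp only [this, Finset.sum_const, Finset.card_univ, Fintype.card_prod, ZMod.card,
        smul_eq_mul]
    rw [hcard, h1]
    push_cast
    rw [pow_mul]
    have hpt : ((p : ℚ) ^ t) ≠ 0 := pow_ne_zero t (ne_of_gt hppos)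
    field_simp
    ring
  · -- Legendre symbol is -1
    have hempty : IsEmpty {w : ZMod (p ^ t) × ZMod (p ^ t) × ZMod (p ^ t) //
          -w.1 ^ 2 - (p : ZMod (p ^ t)) * w.2.1 * w.2.2 = (m : ZMod (p ^ t))} := by
      constructor
      rintro ⟨⟨x, y, z⟩, hw⟩
      have := congrArg (ZMod.castHom hdvd (ZMod p)) hw
      simp only [map_sub, map_neg, map_mul, map_pow, map_intCast, map_natCast,
        ZMod.natCast_self, zero_mul, mul_zero, sub_zero] at this
      have hsq : IsSquare ((-m : ℤ) : ZMod p) := by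
        refine ⟨(ZMod.castHom hdvd (ZMod p)) x, ?_⟩
        push_cast
        rw [← this]
        ring
      rw [← legendreSym.eq_one_iff p hm0] at hsq
      rw [h1] at hsq
      norm_num at hsq
    rw [Nat.card_of_isEmpty, h1]
    push_cast
    ring
end

section
/- Let u be a nonnegative integer. Then for all positive integers n, the local density at 2 of the form 3x² − 2^{2u+3}(y² + z² + yz) at 4n equals twice the local density at 2 of 3x² − 2^{2u+1}(y² + z² + yz) at n. -/
open Finset

private def cnt (k n t : ℕ) : ℕ :=
  ((range (2^t) ×ˢ range (2^t) ×ˢ range (2^t)).filter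
    (fun w => (3*(w.1:ℤ)^2 - 2^k*((w.2.1:ℤ)^2 + (w.2.2:ℤ)^2 + (w.2.1:ℤ)*(w.2.2:ℤ)))
        ≡ (n:ℤ) [ZMOD 2^t])).card

private lemma cnt_eq (k n t : ℕ) :
    cnt k n t = ∑ x ∈ range (2^t), ∑ y ∈ range (2^t), ∑ z ∈ range (2^t),
      (if (3*(x:ℤ)^2 - 2^k*((y:ℤ)^2 + (z:ℤ)^2 + (y:ℤ)*(z:ℤ))) ≡ (n:ℤ) [ZMOD 2^t]
        then 1 else 0) := by
  rw [cnt, Finset.card_filter, Finset.sum_product]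
  simp only [Finset.sum_product]

private lemma SPL (m q : ℕ) (g : ℕ → ℕ) :
    ∑ a ∈ range (q * m), g a = ∑ r ∈ range m, ∑ i ∈ range q, g (i * m + r) := by
  induction q with
  | zero => simp
  | succ q ih =>
    rw [show (q+1)*m = q*m + m by ring, Finset.sum_range_add, ih]
    rw [← Finset.sum_add_distrib]
    refine Finset.sum_congr rfl fun r hr => ?_
    rw [Finset.sum_range_succ]

private lemma SPL3 (m q : ℕ) (g : ℕ → ℕ → ℕ → ℕ) :
    ∑ x ∈ range (q*m), ∑ y ∈ range (q*m), ∑ z ∈ range (q*m), g x y z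
    = ∑ xr ∈ range m, ∑ yr ∈ range m, ∑ zr ∈ range m,
        ∑ xi ∈ range q, ∑ yi ∈ range q, ∑ zi ∈ range q,
          g (xi*m+xr) (yi*m+yr) (zi*m+zr) := by
  simp only [SPL m q]
  refine Finset.sum_congr rfl fun xr _ => ?_
  rw [Finset.sum_comm]
  refine Finset.sum_congr rfl fun yr _ => ?_
  have h1 : ∀ xi : ℕ, (∑ yi ∈ range q, ∑ zr ∈ range m, ∑ zi ∈ range q,
      g (xi*m+xr) (yi*m+yr) (zi*m+zr))
      = ∑ zr ∈ range m, ∑ yi ∈ range q, ∑ zi ∈ range q,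
      g (xi*m+xr) (yi*m+yr) (zi*m+zr) := fun xi => Finset.sum_comm
  rw [Finset.sum_congr rfl (fun xi _ => h1 xi), Finset.sum_comm]

private lemma PER (m q : ℕ) (g : ℕ → ℕ) (hg : ∀ a, g a = g (a % m)) :
    ∑ a ∈ range (q * m), g a = q * ∑ r ∈ range m, g r := by
  rw [SPL, Finset.mul_sum]
  refine Finset.sum_congr rfl fun r hr => ?_
  have hr' : r < m := Finset.mem_range.mp hr
  have h1 : ∑ i ∈ range q, g (i*m+r) = ∑ _i ∈ range q, g r :=
    Finset.sum_congr rfl fun i _ => by rw [hg (i*m+r), show i*m+r = r + m*i by ring, Nat.add_mul_mod_self_left, Nat.mod_eq_of_lt hr']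
  rw [h1, Finset.sum_const, Finset.card_range, smul_eq_mul]

private lemma EVN (m : ℕ) (g : ℕ → ℕ) (hg : ∀ a, Odd a → g a = 0) :
    ∑ a ∈ range (2 * m), g a = ∑ b ∈ range m, g (2*b) := by
  induction m with
  | zero => simp
  | succ m ih =>
    rw [show 2*(m+1) = (2*m)+1+1 by ring, Finset.sum_range_succ, Finset.sum_range_succ,
      Finset.sum_range_succ, ih, hg (2*m+1) ⟨m, by ring⟩]
    omega


private lemma INV {M : ℤ} (k : ℕ) {x x' y y' z z' : ℤ}
    (hx : x ≡ x' [ZMOD M]) (hy : y ≡ y' [ZMOD M]) (hz : z ≡ z' [ZMOD M]) :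
    3*x^2 - 2^k*(y^2+z^2+y*z) ≡ 3*x'^2 - 2^k*(y'^2+z'^2+y'*z') [ZMOD M] :=
  ((hx.pow 2).mul_left 3).sub ((((hy.pow 2).add (hz.pow 2)).add (hy.mul hz)).mul_left (2^k))

private lemma KC2 (j s : ℕ) (x y z a b c : ℤ) :
    3*(a*2^(s+2)+x)^2 - 2^(j+1)*((b*2^(s+2)+y)^2 + (c*2^(s+2)+z)^2 + (b*2^(s+2)+y)*(c*2^(s+2)+z))
    ≡ (3*x^2 - 2^(j+1)*(y^2+z^2+y*z))
      + 2^(s+3)*((3*x)*a + (-(2^j*(2*y+z)))*b + (-(2^j*(y+2*z)))*c) [ZMOD 2^(s+4)] := by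
  rw [Int.modEq_iff_dvd]
  exact ⟨-(2^s*(3*a^2 - 2^(j+1)*(b^2+c^2+b*c))), by ring⟩

private lemma KC1inv (j t : ℕ) {x x' y y' z z' : ℤ} (hx : x ≡ x' [ZMOD 2^(t+1)])
    (hy : y ≡ y' [ZMOD 2^(t+1)]) (hz : z ≡ z' [ZMOD 2^(t+1)]) :
    3*x^2 - 2^(j+1)*(y^2+z^2+y*z) ≡ 3*x'^2 - 2^(j+1)*(y'^2+z'^2+y'*z') [ZMOD 2^(t+2)] := by
  obtain ⟨d, hd⟩ := Int.modEq_iff_dvd.mp hx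
  obtain ⟨e, he⟩ := Int.modEq_iff_dvd.mp hy
  obtain ⟨f, hf⟩ := Int.modEq_iff_dvd.mp hz
  have hx' : x' = x + 2^(t+1)*d := by linarith
  have hy' : y' = y + 2^(t+1)*e := by linarith
  have hz' : z' = z + 2^(t+1)*f := by linarith
  rw [Int.modEq_iff_dvd]
  exact ⟨3*x*d - 2^j*((2*y+z)*e+(y+2*z)*f) + 2^t*(3*d^2 - 2^(j+1)*(e^2+f^2+e*f)),
    by rw [hx', hy', hz']; ring⟩

private lemma oddCast {a : ℤ} (h : Odd a) : (a : ZMod 2) = 1 := by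
  obtain ⟨r, rfl⟩ := h
  push_cast
  rw [show ((2:ZMod 2)) = 0 by decide]
  ring

private lemma count32' (A B C Θ : ZMod 2) (h : A = 1 ∨ B = 1 ∨ C = 1) :
    (∑ a ∈ range 4, ∑ b ∈ range 4, ∑ c ∈ range 4,
      if A*(a:ZMod 2)+B*(b:ZMod 2)+C*(c:ZMod 2) = Θ then (1:ℕ) else 0) = 32 := by
  revert h; revert A B C Θ; decide

private lemma count32 (α β γ θ : ℤ) (h : Odd α ∨ Odd β ∨ Odd γ) :
    (∑ a ∈ range 4, ∑ b ∈ range 4, ∑ c ∈ range 4,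
      if α*(a:ℕ)+β*(b:ℕ)+γ*(c:ℕ) ≡ θ [ZMOD 2] then (1:ℕ) else 0) = 32 := by
  have key : ∀ a b c : ℕ, (α*(a:ℤ)+β*(b:ℤ)+γ*(c:ℤ) ≡ θ [ZMOD 2]) ↔
      ((α : ZMod 2)*(a:ZMod 2)+(β : ZMod 2)*(b:ZMod 2)+(γ : ZMod 2)*(c:ZMod 2) = (θ : ZMod 2)) := by
    intro a b c
    rw [show ((2:ℤ)) = ((2:ℕ):ℤ) by norm_num, ← ZMod.intCast_eq_intCast_iff]
    push_cast
    rfl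
  simp only [key]
  refine count32' _ _ _ _ ?_
  rcases h with h | h | h
  · exact Or.inl (oddCast h)
  · exact Or.inr (Or.inl (oddCast h))
  · exact Or.inr (Or.inr (oddCast h))

private lemma natModCast2 (a t : ℕ) : ((a % 2^t : ℕ) : ℤ) ≡ (a:ℤ) [ZMOD (2:ℤ)^t] := by
  show ((a % 2^t : ℕ) : ℤ) % (2:ℤ)^t = (a:ℤ) % (2:ℤ)^t
  rw [show ((2:ℤ)^t) = ((2^t:ℕ):ℤ) by push_cast; ring, ← Int.natCast_mod, ← Int.natCast_mod,
    Nat.mod_mod_of_dvd _ dvd_rfl]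

private lemma condIff {k t n : ℕ} {x x' y y' z z' : ℤ} (hx : x ≡ x' [ZMOD (2:ℤ)^t])
    (hy : y ≡ y' [ZMOD (2:ℤ)^t]) (hz : z ≡ z' [ZMOD (2:ℤ)^t]) :
    (3*x^2 - 2^k*(y^2+z^2+y*z) ≡ (n:ℤ) [ZMOD (2:ℤ)^t]) ↔
    (3*x'^2 - 2^k*(y'^2+z'^2+y'*z') ≡ (n:ℤ) [ZMOD (2:ℤ)^t]) :=
  ⟨fun h => ((INV k hx hy hz).symm).trans h, fun h => (INV k hx hy hz).trans h⟩

private lemma SUBX (j t n : ℕ) (x y z : ℤ) :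
    (3*(2*x)^2 - 2^(j+3)*(y^2+z^2+y*z) ≡ 4*(n:ℤ) [ZMOD 2^(t+2)]) ↔
    (3*x^2 - 2^(j+1)*(y^2+z^2+y*z) ≡ (n:ℤ) [ZMOD 2^t]) := by
  rw [Int.modEq_iff_dvd, Int.modEq_iff_dvd,
    show 4*(n:ℤ) - (3*(2*x)^2 - 2^(j+3)*(y^2+z^2+y*z))
      = 4*((n:ℤ) - (3*x^2-2^(j+1)*(y^2+z^2+y*z))) by ring,
    show ((2:ℤ))^(t+2) = 4*2^t by ring]
  exact mul_dvd_mul_iff_left (by norm_num : (4:ℤ) ≠ 0)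

private lemma vanO (j t n : ℕ) (x y z : ℤ) (hx : Odd x) :
    ¬ (3*x^2 - 2^(j+3)*(y^2+z^2+y*z) ≡ ((4*n:ℕ):ℤ) [ZMOD 2^(t+2)]) := by
  intro hc
  obtain ⟨c, hcc⟩ := (hc.of_dvd (show (4:ℤ) ∣ 2^(t+2) from ⟨2^t, by ring⟩)).dvd
  obtain ⟨w, rfl⟩ := hx
  have h3 : (4:ℤ) ∣ 3 :=
    ⟨(n:ℤ) + 2*2^j*(y^2+z^2+y*z) - c - 3*w^2 - 3*w, by push_cast at hcc ⊢; linear_combination -hcc⟩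
  norm_num at h3

private lemma R1 (j n t : ℕ) : cnt (j+3) (4*n) (t+2) = 32 * cnt (j+1) n t := by
  rw [cnt_eq, cnt_eq]
  rw [show (2:ℕ)^(t+2) = 2*2^(t+1) by ring]
  rw [EVN _ _ ?hodd]
  case hodd =>
    intro a ha
    refine Finset.sum_eq_zero fun y _ => Finset.sum_eq_zero fun z _ => ?_
    rw [if_neg]
    exact vanO j t n _ _ _ (by obtain ⟨w, rfl⟩ := ha; exact ⟨(w:ℤ), by push_cast; ring⟩)
  simp only [Nat.cast_mul, Nat.cast_ofNat, SUBX j t n]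
  rw [show (2:ℕ)^(t+1) = 2*2^t by ring]
  rw [PER _ _ _ ?hpx]
  case hpx =>
    intro a
    refine Finset.sum_congr rfl fun y _ => Finset.sum_congr rfl fun z _ => ?_
    congr 1
    rw [eq_iff_iff]
    exact condIff (natModCast2 a t).symm (Int.ModEq.refl _) (Int.ModEq.refl _)
  rw [show (32 : ℕ) = 2*16 by norm_num, mul_assoc]
  congr 1
  rw [Finset.mul_sum]
  refine Finset.sum_congr rfl fun xr _ => ?_
  rw [show 2*(2*2^t) = 4*2^t by ring]
  rw [PER _ _ _ ?hpy]
  case hpy =>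
    intro a
    refine Finset.sum_congr rfl fun z _ => ?_
    congr 1
    rw [eq_iff_iff]
    exact condIff (Int.ModEq.refl _) (natModCast2 a t).symm (Int.ModEq.refl _)
  rw [show (16:ℕ) = 4*4 by norm_num, mul_assoc]
  congr 1
  rw [Finset.mul_sum]
  refine Finset.sum_congr rfl fun yr _ => ?_
  rw [PER _ _ _ ?hpz]
  case hpz =>
    intro a
    congr 1
    rw [eq_iff_iff]
    exact condIff (Int.ModEq.refl _) (Int.ModEq.refl _) (natModCast2 a t).symm

private lemma SUBX1 (t n : ℕ) (x y z : ℤ) :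
    (3*(2*x)^2 - 2^1*((2*y)^2+(2*z)^2+(2*y)*(2*z)) ≡ 4*(n:ℤ) [ZMOD 2^(t+2)]) ↔
    (3*x^2 - 2^1*(y^2+z^2+y*z) ≡ (n:ℤ) [ZMOD 2^t]) := by
  rw [Int.modEq_iff_dvd, Int.modEq_iff_dvd,
    show 4*(n:ℤ) - (3*(2*x)^2 - 2^1*((2*y)^2+(2*z)^2+(2*y)*(2*z)))
      = 4*((n:ℤ) - (3*x^2-2^1*(y^2+z^2+y*z))) by ring,
    show ((2:ℤ))^(t+2) = 4*2^t by ring]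
  exact mul_dvd_mul_iff_left (by norm_num : (4:ℤ) ≠ 0)

private lemma vanO1 (t n : ℕ) (x y z : ℤ) (hx : Odd x) :
    ¬ (3*x^2 - 2^1*(y^2+z^2+y*z) ≡ ((4*n:ℕ):ℤ) [ZMOD 2^(t+2)]) := by
  intro hc
  obtain ⟨c, hcc⟩ := (hc.of_dvd (show (2:ℤ) ∣ 2^(t+2) from ⟨2^(t+1), by ring⟩)).dvd
  obtain ⟨w, rfl⟩ := hx
  have h2 : (2:ℤ) ∣ 1 :=
    ⟨2*(n:ℤ) + (y^2+z^2+y*z) - c - 6*w^2 - 6*w - 1, by push_cast at hcc ⊢; linear_combination -hcc⟩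
  norm_num at h2

private lemma vanOy (t n : ℕ) (x y z : ℤ) (hy : Odd y) :
    ¬ (3*(2*x)^2 - 2^1*(y^2+z^2+y*z) ≡ 4*(n:ℤ) [ZMOD 2^(t+2)]) := by
  intro hc
  obtain ⟨c, hcc⟩ := (hc.of_dvd (show (4:ℤ) ∣ 2^(t+2) from ⟨2^t, by ring⟩)).dvd
  obtain ⟨w, rfl⟩ := hy
  obtain ⟨e, he⟩ := Int.even_mul_succ_self z
  have h2 : (4:ℤ) ∣ 2 :=
    ⟨c - (n:ℤ) + 3*x^2 - 2*w^2 - 2*w - w*z - e, by linear_combination hcc - 2*he⟩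
  norm_num at h2

private lemma vanOz (t n : ℕ) (x y z : ℤ) (hz : Odd z) :
    ¬ (3*(2*x)^2 - 2^1*((2*y)^2+z^2+(2*y)*z) ≡ 4*(n:ℤ) [ZMOD 2^(t+2)]) := by
  intro hc
  obtain ⟨c, hcc⟩ := (hc.of_dvd (show (4:ℤ) ∣ 2^(t+2) from ⟨2^t, by ring⟩)).dvd
  obtain ⟨w, rfl⟩ := hz
  have h2 : (4:ℤ) ∣ 2 :=
    ⟨c - (n:ℤ) + 3*x^2 - 2*y^2 - 2*w^2 - 2*w - 2*y*w - y, by linear_combination hcc⟩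
  norm_num at h2

private lemma R2 (n t : ℕ) : cnt 1 (4*n) (t+2) = 8 * cnt 1 n t := by
  rw [cnt_eq, cnt_eq]
  rw [show (2:ℕ)^(t+2) = 2*2^(t+1) by ring]
  rw [EVN _ _ ?hodd]
  case hodd =>
    intro a ha
    refine Finset.sum_eq_zero fun y _ => Finset.sum_eq_zero fun z _ => ?_
    rw [if_neg]
    exact vanO1 t n _ _ _ (by obtain ⟨w, rfl⟩ := ha; exact ⟨(w:ℤ), by push_cast; ring⟩)
  simp only [Nat.cast_mul, Nat.cast_ofNat]
  have hEy : ∀ b : ℕ, (∑ y ∈ range (2*2^(t+1)), ∑ z ∈ range (2*2^(t+1)),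
      if 3*(2*(b:ℤ))^2 - 2^1*((y:ℤ)^2+(z:ℤ)^2+(y:ℤ)*(z:ℤ)) ≡ 4*(n:ℤ) [ZMOD 2^(t+2)]
        then (1:ℕ) else 0)
      = ∑ y' ∈ range (2^(t+1)), ∑ z ∈ range (2*2^(t+1)),
      if 3*(2*(b:ℤ))^2 - 2^1*((↑(2*y'):ℤ)^2+(z:ℤ)^2+(↑(2*y'):ℤ)*(z:ℤ)) ≡ 4*(n:ℤ) [ZMOD 2^(t+2)]
        then (1:ℕ) else 0 := by
    intro b
    refine EVN _ _ fun a ha => Finset.sum_eq_zero fun z _ => ?_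
    rw [if_neg]
    exact vanOy t n _ _ _ (by obtain ⟨w, rfl⟩ := ha; exact ⟨(w:ℤ), by push_cast; ring⟩)
  rw [Finset.sum_congr rfl fun b _ => hEy b]
  simp only [Nat.cast_mul, Nat.cast_ofNat]
  have hEz : ∀ b y' : ℕ, (∑ z ∈ range (2*2^(t+1)),
      if 3*(2*(b:ℤ))^2 - 2^1*((2*(y':ℤ))^2+(z:ℤ)^2+(2*(y':ℤ))*(z:ℤ)) ≡ 4*(n:ℤ) [ZMOD 2^(t+2)]
        then (1:ℕ) else 0)
      = ∑ z' ∈ range (2^(t+1)),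
      if 3*(2*(b:ℤ))^2 - 2^1*((2*(y':ℤ))^2+(↑(2*z'):ℤ)^2+(2*(y':ℤ))*(↑(2*z'):ℤ)) ≡ 4*(n:ℤ) [ZMOD 2^(t+2)]
        then (1:ℕ) else 0 := by
    intro b y'
    refine EVN _ _ fun a ha => ?_
    rw [if_neg]
    exact vanOz t n _ _ _ (by obtain ⟨w, rfl⟩ := ha; exact ⟨(w:ℤ), by push_cast; ring⟩)
  rw [Finset.sum_congr rfl fun b _ => Finset.sum_congr rfl fun y' _ => hEz b y']
  simp only [Nat.cast_mul, Nat.cast_ofNat, SUBX1 t n]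
  rw [show (2:ℕ)^(t+1) = 2*2^t by ring]
  rw [PER _ _ _ ?hpx]
  case hpx =>
    intro a
    refine Finset.sum_congr rfl fun y _ => Finset.sum_congr rfl fun z _ => ?_
    congr 1
    rw [eq_iff_iff]
    exact condIff (natModCast2 a t).symm (Int.ModEq.refl _) (Int.ModEq.refl _)
  rw [show (8 : ℕ) = 2*4 by norm_num, mul_assoc]
  congr 1
  rw [Finset.mul_sum]
  refine Finset.sum_congr rfl fun xr _ => ?_
  rw [PER _ _ _ ?hpy]
  case hpy =>
    intro a
    refine Finset.sum_congr rfl fun z _ => ?_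
    congr 1
    rw [eq_iff_iff]
    exact condIff (Int.ModEq.refl _) (natModCast2 a t).symm (Int.ModEq.refl _)
  rw [show (4:ℕ) = 2*2 by norm_num, mul_assoc]
  congr 1
  rw [Finset.mul_sum]
  refine Finset.sum_congr rfl fun yr _ => ?_
  rw [PER _ _ _ ?hpz]
  case hpz =>
    intro a
    congr 1
    rw [eq_iff_iff]
    exact condIff (Int.ModEq.refl _) (Int.ModEq.refl _) (natModCast2 a t).symm

private lemma castStep (s : ℕ) (a r : ℤ) :
    a*2^(s+2)+r ≡ r [ZMOD (2:ℤ)^(s+2)] := by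
  rw [Int.modEq_iff_dvd]
  exact ⟨-a, by ring⟩

private lemma KC1inv' (j s : ℕ) {x x' y y' z z' : ℤ} (hx : x ≡ x' [ZMOD 2^(s+2)])
    (hy : y ≡ y' [ZMOD 2^(s+2)]) (hz : z ≡ z' [ZMOD 2^(s+2)]) :
    3*x^2 - 2^(j+1)*(y^2+z^2+y*z) ≡ 3*x'^2 - 2^(j+1)*(y'^2+z'^2+y'*z') [ZMOD 2^(s+3)] := by
  obtain ⟨d, hd⟩ := Int.modEq_iff_dvd.mp hx
  obtain ⟨e, he⟩ := Int.modEq_iff_dvd.mp hy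
  obtain ⟨f, hf⟩ := Int.modEq_iff_dvd.mp hz
  have hx' : x' = x + 2^(s+2)*d := by linarith
  have hy' : y' = y + 2^(s+2)*e := by linarith
  have hz' : z' = z + 2^(s+2)*f := by linarith
  rw [Int.modEq_iff_dvd]
  exact ⟨3*x*d - 2^j*((2*y+z)*e+(y+2*z)*f) + 2^(s+1)*(3*d^2 - 2^(j+1)*(e^2+f^2+e*f)),
    by rw [hx', hy', hz']; ring⟩

private lemma key5g (s : ℕ) (F N θ : ℤ) (hθ : N - F = 2^(s+3)*θ) (L : ℤ) :
    (F + 2^(s+3)*L ≡ N [ZMOD 2^(s+4)]) ↔ (L ≡ θ [ZMOD 2]) := by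
  rw [Int.modEq_iff_dvd, Int.modEq_iff_dvd,
    show N - (F + 2^(s+3)*L) = 2^(s+3)*(θ - L) by linear_combination hθ,
    show ((2:ℤ))^(s+4) = 2^(s+3)*2 by ring]
  exact mul_dvd_mul_iff_left (pow_ne_zero (s+3) two_ne_zero)

private lemma R3 (j n s : ℕ)
    (H : ∀ x y z : ℤ, 3*x^2 - 2^(j+1)*(y^2+z^2+y*z) ≡ (n:ℤ) [ZMOD 4] →
      Odd x ∨ (j = 0 ∧ (Odd y ∨ Odd z))) :
    cnt (j+1) n (s+4) = 4 * cnt (j+1) n (s+3) := by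
  rw [cnt_eq, cnt_eq]
  rw [show (2:ℕ)^(s+4) = 4*2^(s+2) by ring, show (2:ℕ)^(s+3) = 2*2^(s+2) by ring]
  rw [SPL3, SPL3]
  simp only [Nat.cast_add, Nat.cast_mul, Nat.cast_pow, Nat.cast_ofNat, Finset.mul_sum]
  refine Finset.sum_congr rfl fun xr _ => Finset.sum_congr rfl fun yr _ =>
    Finset.sum_congr rfl fun zr _ => ?_
  have key3 : ∀ a b c : ℕ,
      (3*((a:ℤ)*2^(s+2)+(xr:ℤ))^2 - 2^(j+1)*(((b:ℤ)*2^(s+2)+(yr:ℤ))^2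
          + ((c:ℤ)*2^(s+2)+(zr:ℤ))^2
          + ((b:ℤ)*2^(s+2)+(yr:ℤ))*((c:ℤ)*2^(s+2)+(zr:ℤ))) ≡ (n:ℤ) [ZMOD 2^(s+3)])
      ↔ (3*(xr:ℤ)^2 - 2^(j+1)*((yr:ℤ)^2+(zr:ℤ)^2+(yr:ℤ)*(zr:ℤ)) ≡ (n:ℤ) [ZMOD 2^(s+3)]) := by
    intro a b c
    have h := KC1inv' j s (castStep s (a:ℤ) (xr:ℤ)) (castStep s (b:ℤ) (yr:ℤ))
      (castStep s (c:ℤ) (zr:ℤ))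
    exact ⟨fun hh => h.symm.trans hh, fun hh => h.trans hh⟩
  have key4 : ∀ a b c : ℕ,
      (3*((a:ℤ)*2^(s+2)+(xr:ℤ))^2 - 2^(j+1)*(((b:ℤ)*2^(s+2)+(yr:ℤ))^2
          + ((c:ℤ)*2^(s+2)+(zr:ℤ))^2
          + ((b:ℤ)*2^(s+2)+(yr:ℤ))*((c:ℤ)*2^(s+2)+(zr:ℤ))) ≡ (n:ℤ) [ZMOD 2^(s+4)])
      ↔ ((3*(xr:ℤ)^2 - 2^(j+1)*((yr:ℤ)^2+(zr:ℤ)^2+(yr:ℤ)*(zr:ℤ)))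
          + 2^(s+3)*((3*(xr:ℤ))*(a:ℤ) + (-(2^j*(2*(yr:ℤ)+(zr:ℤ))))*(b:ℤ)
            + (-(2^j*((yr:ℤ)+2*(zr:ℤ))))*(c:ℤ)) ≡ (n:ℤ) [ZMOD 2^(s+4)]) := by
    intro a b c
    have h := KC2 j s (xr:ℤ) (yr:ℤ) (zr:ℤ) (a:ℤ) (b:ℤ) (c:ℤ)
    exact ⟨fun hh => h.symm.trans hh, fun hh => h.trans hh⟩
  simp only [key3, key4]
  by_cases hF : (3*(xr:ℤ)^2 - 2^(j+1)*((yr:ℤ)^2+(zr:ℤ)^2+(yr:ℤ)*(zr:ℤ)) ≡ (n:ℤ) [ZMOD 2^(s+3)])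
  · obtain ⟨θ, hθ⟩ := hF.dvd
    simp only [key5g s _ _ θ hθ]
    simp only [Finset.sum_const, Finset.card_range, smul_eq_mul, if_pos hF]
    rw [count32 (3*(xr:ℤ)) (-(2^j*(2*(yr:ℤ)+(zr:ℤ)))) (-(2^j*((yr:ℤ)+2*(zr:ℤ)))) θ ?hodd]
    · norm_num
    case hodd =>
      have h4 := H (xr:ℤ) (yr:ℤ) (zr:ℤ)
        (hF.of_dvd (show (4:ℤ) ∣ 2^(s+3) from ⟨2^(s+1), by ring⟩))
      rcases h4 with h | ⟨rfl, h | h⟩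
      · exact Or.inl ((by decide : Odd (3:ℤ)).mul h)
      · obtain ⟨w, hw⟩ := h
        exact Or.inr (Or.inr ⟨-(w+(zr:ℤ)+1), by rw [hw]; ring⟩)
      · obtain ⟨w, hw⟩ := h
        exact Or.inr (Or.inl ⟨-((yr:ℤ)+w+1), by rw [hw]; ring⟩)
  · have hzero : ∀ L : ℤ,
        ¬ ((3*(xr:ℤ)^2 - 2^(j+1)*((yr:ℤ)^2+(zr:ℤ)^2+(yr:ℤ)*(zr:ℤ))) + 2^(s+3)*L
          ≡ (n:ℤ) [ZMOD 2^(s+4)]) := by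
      intro L hc
      exact hF ((Int.modEq_iff_dvd.mpr ⟨L, by ring⟩).trans
        (hc.of_dvd (show ((2:ℤ))^(s+3) ∣ 2^(s+4) from ⟨2, by ring⟩)))
    simp only [if_neg hF, if_neg (hzero _), Finset.sum_const, Finset.card_range,
      smul_eq_mul, mul_zero]

private lemma Hlem (j n : ℕ) (h4 : ¬ (4 ∣ n)) : ∀ x y z : ℤ,
    3*x^2 - 2^(j+1)*(y^2+z^2+y*z) ≡ (n:ℤ) [ZMOD 4] →
    Odd x ∨ (j = 0 ∧ (Odd y ∨ Odd z)) := by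
  intro x y z h
  rcases Int.even_or_odd x with ⟨w, hw⟩ | hx
  · right
    obtain ⟨c, hc⟩ := h.dvd
    subst hw
    cases j with
    | succ i =>
      exfalso
      apply h4
      have hd : (4:ℤ) ∣ (n:ℤ) :=
        ⟨c + 3*w^2 - 2^i*(y^2+z^2+y*z), by linear_combination hc⟩
      exact_mod_cast hd
    | zero =>
      refine ⟨rfl, ?_⟩
      by_contra hyz
      push_neg at hyz
      obtain ⟨hy, hz⟩ := hyz
      rw [Int.not_odd_iff_even] at hy hz
      obtain ⟨e, he⟩ := hy
      obtain ⟨f, hf⟩ := hz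
      apply h4
      have hd : (4:ℤ) ∣ (n:ℤ) :=
        ⟨c + 3*w^2 - 2*(e^2+f^2+e*f), by rw [he, hf] at hc; linear_combination hc⟩
      exact_mod_cast hd
  · exact Or.inl hx

private lemma stab : ∀ n : ℕ, 0 < n → ∀ u : ℕ, ∃ T : ℕ, ∀ t : ℕ, T ≤ t →
    cnt (2*u+1) n (t+1) = 4 * cnt (2*u+1) n t := by
  intro n
  induction n using Nat.strong_induction_on with
  | _ n IH =>
    intro hn u
    by_cases h4 : 4 ∣ n
    · obtain ⟨m, rfl⟩ := h4
      have hm : 0 < m := by omega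
      cases u with
      | zero =>
        obtain ⟨T, hT⟩ := IH m (by omega) hm 0
        refine ⟨T+2, fun t ht => ?_⟩
        obtain ⟨s, rfl⟩ : ∃ s, t = s + 2 := ⟨t - 2, by omega⟩
        have hs : T ≤ s := by omega
        calc cnt (2*0+1) (4*m) (s+2+1) = 8 * cnt 1 m (s+1) := R2 m (s+1)
          _ = 8 * (4 * cnt (2*0+1) m s) := by rw [hT s hs]
          _ = 4 * (8 * cnt 1 m s) := by ring
          _ = 4 * cnt (2*0+1) (4*m) (s+2) := by rw [R2 m s]
      | succ v =>
        obtain ⟨T, hT⟩ := IH m (by omega) hm v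
        refine ⟨T+2, fun t ht => ?_⟩
        obtain ⟨s, rfl⟩ : ∃ s, t = s + 2 := ⟨t - 2, by omega⟩
        have hs : T ≤ s := by omega
        calc cnt (2*(v+1)+1) (4*m) (s+2+1) = 32 * cnt (2*v+1) m (s+1) := R1 (2*v) m (s+1)
          _ = 32 * (4 * cnt (2*v+1) m s) := by rw [hT s hs]
          _ = 4 * (32 * cnt (2*v+1) m s) := by ring
          _ = 4 * cnt (2*(v+1)+1) (4*m) (s+2) := by
              rw [show cnt (2*(v+1)+1) (4*m) (s+2) = 32 * cnt (2*v+1) m s from R1 (2*v) m s]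
    · refine ⟨3, fun t ht => ?_⟩
      obtain ⟨s, rfl⟩ : ∃ s, t = s + 3 := ⟨t - 3, by omega⟩
      exact R3 (2*u) n s (Hlem (2*u) n h4)

private lemma bridge (k n t : ℕ) :
    (Nat.card {w : ZMod (2^t) × ZMod (2^t) × ZMod (2^t) //
      3 * w.1^2 - (2 : ZMod (2^t))^k * (w.2.1^2 + w.2.2^2 + w.2.1*w.2.2) = (n : ZMod (2^t))})
    = cnt k n t := by
  haveI : NeZero ((2:ℕ)^t) := ⟨pow_ne_zero t (by norm_num)⟩
  have cond : ∀ w : ZMod (2^t) × ZMod (2^t) × ZMod (2^t),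
      (3*w.1^2 - (2 : ZMod (2^t))^k * (w.2.1^2 + w.2.2^2 + w.2.1*w.2.2) = (n : ZMod (2^t)))
      ↔ (3*(w.1.val:ℤ)^2 - 2^k*((w.2.1.val:ℤ)^2+(w.2.2.val:ℤ)^2+(w.2.1.val:ℤ)*(w.2.2.val:ℤ))
          ≡ (n:ℤ) [ZMOD 2^t]) := by
    intro w
    rw [show ((2:ℤ)^t) = ((2^t : ℕ) : ℤ) by push_cast; ring, ← ZMod.intCast_eq_intCast_iff]
    push_cast
    rw [ZMod.natCast_rightInverse w.1, ZMod.natCast_rightInverse w.2.1,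
      ZMod.natCast_rightInverse w.2.2]
  rw [Nat.card_eq_fintype_card, Fintype.card_subtype, cnt]
  refine Finset.card_nbij' (fun w => (w.1.val, w.2.1.val, w.2.2.val))
    (fun a => ((a.1 : ZMod (2^t)), ((a.2.1 : ZMod (2^t)), (a.2.2 : ZMod (2^t)))))
    ?_ ?_ ?_ ?_
  · intro w hw
    rw [Finset.mem_coe, Finset.mem_filter] at hw ⊢
    refine ⟨?_, (cond w).mp hw.2⟩
    simp [Finset.mem_product, ZMod.val_lt]
  · intro a ha
    rw [Finset.mem_coe, Finset.mem_filter] at ha ⊢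
    obtain ⟨hmem, hcond⟩ := ha
    simp only [Finset.mem_product, Finset.mem_range] at hmem
    obtain ⟨h1, h2, h3⟩ := hmem
    refine ⟨Finset.mem_univ _, ?_⟩
    rw [cond]
    simpa only [ZMod.val_cast_of_lt h1, ZMod.val_cast_of_lt h2, ZMod.val_cast_of_lt h3] using hcond
  · intro w hw
    ext <;> simp [ZMod.natCast_rightInverse w.1, ZMod.natCast_rightInverse w.2.1,
      ZMod.natCast_rightInverse w.2.2]
  · intro a ha
    rw [Finset.mem_coe, Finset.mem_filter] at ha
    obtain ⟨hmem, -⟩ := ha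
    simp only [Finset.mem_product, Finset.mem_range] at hmem
    obtain ⟨h1, h2, h3⟩ := hmem
    ext <;> simp [ZMod.val_cast_of_lt, h1, h2, h3, Nat.mod_eq_of_lt]

/-- Let `u ≥ 0`. For every positive integer `n`, the local density at `2` of
`3x² − 2^(2u+3)(y² + z² + yz)` at `4n` equals twice the local density at `2` of
`3x² − 2^(2u+1)(y² + z² + yz)` at `n`. -/
theorem localDensity_two_shift_anisotropic (u : ℕ) (n : ℕ) (hn : 0 < n) :
    ∃ d : ℚ,
      (∃ T : ℕ, ∀ t ≥ T,
        (Nat.card {w : ZMod (2 ^ t) × ZMod (2 ^ t) × ZMod (2 ^ t) //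
            3 * w.1 ^ 2 - (2 : ZMod (2 ^ t)) ^ (2 * u + 1)
                * (w.2.1 ^ 2 + w.2.2 ^ 2 + w.2.1 * w.2.2)
              = (n : ZMod (2 ^ t))} : ℚ)
            / (2 : ℚ) ^ (2 * t)
          = d) ∧
      (∃ T : ℕ, ∀ t ≥ T,
        (Nat.card {w : ZMod (2 ^ t) × ZMod (2 ^ t) × ZMod (2 ^ t) //
            3 * w.1 ^ 2 - (2 : ZMod (2 ^ t)) ^ (2 * u + 3)
                * (w.2.1 ^ 2 + w.2.2 ^ 2 + w.2.1 * w.2.2)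
              = ((4 * n : ℕ) : ZMod (2 ^ t))} : ℚ)
            / (2 : ℚ) ^ (2 * t)
          = 2 * d) := by
  obtain ⟨T, hT⟩ := stab n hn u
  have hstab : ∀ t, T ≤ t →
      (cnt (2*u+1) n t : ℚ)/2^(2*t) = (cnt (2*u+1) n T : ℚ)/2^(2*T) := by
    intro t ht
    induction t, ht using Nat.le_induction with
    | base => rfl
    | succ t ht ih =>
      rw [hT t ht, ← ih]
      push_cast
      rw [show 2*(t+1) = 2*t+2 by ring, pow_add]
      have h0 : ((2:ℚ)^(2*t)) ≠ 0 := by positivity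
      field_simp
      ring
  refine ⟨(cnt (2*u+1) n T : ℚ) / 2^(2*T), ⟨T, fun t ht => ?_⟩, ⟨T+2, fun t ht => ?_⟩⟩
  · rw [bridge]
    exact hstab t ht
  · obtain ⟨s, rfl⟩ : ∃ s, t = s + 2 := ⟨t-2, by omega⟩
    have hs : T ≤ s := by omega
    rw [bridge]
    rw [show cnt (2*u+3) (4*n) (s+2) = 32 * cnt (2*u+1) n s from R1 (2*u) n s,
      ← hstab s hs]
    push_cast
    rw [show 2*(s+2) = 2*s+4 by ring, pow_add]
    have h0 : ((2:ℚ)^(2*s)) ≠ 0 := by positivity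
    field_simp
    ring
end

section
/- Let v be a nonnegative integer. The local density at 2 of the ternary form −2^{v+2}·x² − y·z at n = 1 equals 1/2. -/
/-- Let `v ≥ 0`. The local density at `2` of the ternary form
`−2^(v+2)·x² − y·z` at `n = 1` equals `1/2`. -/
theorem localDensity_two_isotropic_at_one (v : ℕ) :
    ∃ T : ℕ, ∀ t ≥ T,
      (Nat.card {w : ZMod (2 ^ t) × ZMod (2 ^ t) × ZMod (2 ^ t) //
          -(2 : ZMod (2 ^ t)) ^ (v + 2) * w.1 ^ 2 - w.2.1 * w.2.2 = 1} : ℚ)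
          / (2 : ℚ) ^ (2 * t)
        = 1 / 2 := by
  refine ⟨1, fun t ht => ?_⟩
  haveI : NeZero (2 ^ t) := ⟨pow_ne_zero _ two_ne_zero⟩
  have hnil : IsNilpotent (2 : ZMod (2 ^ t)) := ⟨t, by
    have := ZMod.natCast_self (2 ^ t); push_cast at this; exact this⟩
  have key : ∀ w : ZMod (2 ^ t) × ZMod (2 ^ t) × ZMod (2 ^ t),
      -(2 : ZMod (2 ^ t)) ^ (v + 2) * w.1 ^ 2 - w.2.1 * w.2.2 = 1 → IsUnit w.2.1 := by
    intro w hw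
    have h1 : w.2.1 * w.2.2 = -(1 + (2 : ZMod (2 ^ t)) ^ (v + 2) * w.1 ^ 2) := by
      linear_combination -hw
    have h2 : IsNilpotent ((2 : ZMod (2 ^ t)) ^ (v + 2) * w.1 ^ 2) :=
      (Commute.all _ _).isNilpotent_mul_right (hnil.pow_of_pos (by omega))
    have h3 : IsUnit (w.2.1 * w.2.2) := by
      rw [h1]; exact h2.isUnit_one_add.neg
    exact isUnit_of_mul_isUnit_left h3
  let e : {w : ZMod (2 ^ t) × ZMod (2 ^ t) × ZMod (2 ^ t) //
      -(2 : ZMod (2 ^ t)) ^ (v + 2) * w.1 ^ 2 - w.2.1 * w.2.2 = 1} ≃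
      ZMod (2 ^ t) × (ZMod (2 ^ t))ˣ :=
    { toFun := fun w => (w.1.1, (key w.1 w.2).unit)
      invFun := fun p => ⟨(p.1, (p.2 : ZMod (2 ^ t)),
          (p.2⁻¹ : (ZMod (2 ^ t))ˣ) * (-(1 + (2 : ZMod (2 ^ t)) ^ (v + 2) * p.1 ^ 2))), by
        have : (p.2 : ZMod (2 ^ t)) * ((p.2⁻¹ : (ZMod (2 ^ t))ˣ) *
            (-(1 + (2 : ZMod (2 ^ t)) ^ (v + 2) * p.1 ^ 2)))
            = -(1 + (2 : ZMod (2 ^ t)) ^ (v + 2) * p.1 ^ 2) := by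
          rw [← mul_assoc, Units.mul_inv, one_mul]
        simp only []
        linear_combination -this⟩
      left_inv := by
        rintro ⟨⟨x, y, z⟩, hw⟩
        have hy : ((key ⟨x, y, z⟩ hw).unit : ZMod (2 ^ t)) = y := (key _ hw).unit_spec
        ext
        · rfl
        · exact hy
        · show ((key ⟨x, y, z⟩ hw).unit⁻¹ : (ZMod (2 ^ t))ˣ) *
            (-(1 + (2 : ZMod (2 ^ t)) ^ (v + 2) * x ^ 2)) = z
          rw [eq_comm, Units.eq_inv_mul_iff_mul_eq, hy]
          linear_combination -hw
      right_inv := by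
        rintro ⟨x, u⟩
        refine Prod.ext rfl (Units.ext ?_)
        apply IsUnit.unit_spec }
  have hcard : Nat.card {w : ZMod (2 ^ t) × ZMod (2 ^ t) × ZMod (2 ^ t) //
      -(2 : ZMod (2 ^ t)) ^ (v + 2) * w.1 ^ 2 - w.2.1 * w.2.2 = 1} = 2 ^ t * 2 ^ (t - 1) := by
    rw [Nat.card_congr e, Nat.card_prod, Nat.card_eq_fintype_card, Nat.card_eq_fintype_card,
      ZMod.card, ZMod.card_units_eq_totient, Nat.totient_prime_pow Nat.prime_two ht]
    simp
  rw [hcard]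
  push_cast
  rw [div_eq_div_iff (by positivity) (by norm_num)]
  have h2t : 2 * t = (t + (t - 1)) + 1 := by omega
  rw [h2t, pow_succ, pow_add]
  ring
end

section
/- Let 𝒪 be an order in a definite quaternion algebra over ℚ, written as 𝒪 = ℤ + ℤα₁ + ℤα₂ + ℤα₃ with trd(α₁) = trd(α₂) = 0 and trd(α₃) = 1. Define the ternary quadratic form f_{S⁰}(x,y,z) = nrd(x·2α₁ + y·2α₂ + z·(2α₃ − 1)). Then for all integers n and r, the number of integer triples (x,y,z) with f_{S⁰}(x,y,z) = 4n − r² equals the number of elements α ∈ 𝒪 satisfying α² − r·α + n = 0, i.e. with trd(α) = r and nrd(α) = n. -/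
open Quaternion

private lemma quat_aux {a b : ℚ} (u : ℍ[ℚ,a,b]) (t : ℚ) :
    (2*u - (t:ℍ[ℚ,a,b])) * star (2*u - (t:ℍ[ℚ,a,b]))
      = 4 * (u * star u) - ((2*t : ℚ):ℍ[ℚ,a,b]) * (u + star u) + ((t^2:ℚ):ℍ[ℚ,a,b]) := by
  have h2 : (2 : ℍ[ℚ,a,b]) = ((2:ℚ):ℍ[ℚ,a,b]) := by norm_cast
  have h4 : (4 : ℍ[ℚ,a,b]) = ((4:ℚ):ℍ[ℚ,a,b]) := by norm_cast
  ext <;>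
    simp [QuaternionAlgebra.re_ofNat, QuaternionAlgebra.imI_ofNat, QuaternionAlgebra.imJ_ofNat, QuaternionAlgebra.imK_ofNat, pow_two, QuaternionAlgebra.re_mul, QuaternionAlgebra.imI_mul,
      QuaternionAlgebra.imJ_mul, QuaternionAlgebra.imK_mul, QuaternionAlgebra.re_coe,
      QuaternionAlgebra.imI_coe, QuaternionAlgebra.imJ_coe, QuaternionAlgebra.imK_coe] <;> ring

private lemma quat_intCast {a b : ℚ} (m : ℤ) :
    ((m:ℤ):ℍ[ℚ,a,b]) = ((m:ℚ):ℍ[ℚ,a,b]) := by norm_cast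

set_option maxHeartbeats 1000000 in
/-- Let `𝒪 = ℤ + ℤα₁ + ℤα₂ + ℤα₃` be an order in a definite quaternion algebra
`(a,b/ℚ)` (so `a < 0`, `b < 0`) with `trd(α₁) = trd(α₂) = 0` and `trd(α₃) = 1`.
Define `f_{S⁰}(x,y,z) = nrd(x·2α₁ + y·2α₂ + z·(2α₃ − 1))`. Then for all integers `n`
and `r`, the number of integer triples `(x,y,z)` with `f_{S⁰}(x,y,z) = 4n − r²` equals
the number of `α ∈ 𝒪` with `trd(α) = r` and `nrd(α) = n`, i.e. roots of `x² − rx + n`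
in `𝒪`. Here `trd(α) = α + star α` and `nrd(α) = α * star α`. -/
theorem card_repr_fS0_eq_card_roots (a b : ℚ) (hadef : a < 0) (hbdef : b < 0)
    (α₁ α₂ α₃ : ℍ[ℚ, a, b])
    (h₁ : α₁ + star α₁ = 0) (h₂ : α₂ + star α₂ = 0) (h₃ : α₃ + star α₃ = 1)
    (hfull : Submodule.span ℚ ({1, α₁, α₂, α₃} : Set ℍ[ℚ, a, b]) = ⊤)
    (hmul : ∀ x ∈ Submodule.span ℤ ({1, α₁, α₂, α₃} : Set ℍ[ℚ, a, b]),
      ∀ y ∈ Submodule.span ℤ ({1, α₁, α₂, α₃} : Set ℍ[ℚ, a, b]),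
        x * y ∈ Submodule.span ℤ ({1, α₁, α₂, α₃} : Set ℍ[ℚ, a, b]))
    (n r : ℤ) :
    Nat.card {v : ℤ × ℤ × ℤ //
        ((v.1 : ℍ[ℚ, a, b]) * (2 * α₁) + (v.2.1 : ℍ[ℚ, a, b]) * (2 * α₂)
            + (v.2.2 : ℍ[ℚ, a, b]) * (2 * α₃ - 1))
          * star ((v.1 : ℍ[ℚ, a, b]) * (2 * α₁) + (v.2.1 : ℍ[ℚ, a, b]) * (2 * α₂)
            + (v.2.2 : ℍ[ℚ, a, b]) * (2 * α₃ - 1))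
          = ((4 * n - r ^ 2 : ℤ) : ℍ[ℚ, a, b])}
      = Nat.card {α : ℍ[ℚ, a, b] //
          α ∈ Submodule.span ℤ ({1, α₁, α₂, α₃} : Set ℍ[ℚ, a, b]) ∧
          α + star α = ((r : ℤ) : ℍ[ℚ, a, b]) ∧
          α * star α = ((n : ℤ) : ℍ[ℚ, a, b])} := by
  classical
  have h2c : (2 : ℍ[ℚ,a,b]) = ((2:ℚ) : ℍ[ℚ,a,b]) := by norm_cast
  have h4c : (4 : ℍ[ℚ,a,b]) = ((4:ℚ) : ℍ[ℚ,a,b]) := by norm_cast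
  have hrc : ((r : ℤ) : ℍ[ℚ,a,b]) = ((r:ℚ) : ℍ[ℚ,a,b]) := by norm_cast
  -- components of the basis elements
  have hre₁ : α₁.re = 0 := by
    have h := congrArg QuaternionAlgebra.re h₁
    simp at h; linarith
  have hre₂ : α₂.re = 0 := by
    have h := congrArg QuaternionAlgebra.re h₂
    simp at h; linarith
  have hre₃ : α₃.re = 1/2 := by
    have h := congrArg QuaternionAlgebra.re h₃
    simp at h; linarith
  -- the basis as a function
  have hB : ({1, α₁, α₂, α₃} : Set ℍ[ℚ,a,b])
      = Set.range ![(1:ℍ[ℚ,a,b]), α₁, α₂, α₃] := by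
    ext u
    simp [Matrix.range_cons, Matrix.range_cons_empty]
    tauto
  have hli : LinearIndependent ℚ ![(1:ℍ[ℚ,a,b]), α₁, α₂, α₃] := by
    apply linearIndependent_of_top_le_span_of_card_eq_finrank
    · rw [← hB, hfull]
    · simp [QuaternionAlgebra.finrank_eq_four]
  have huniq : ∀ w x y z w' x' y' z' : ℚ,
      w • (1:ℍ[ℚ,a,b]) + x • α₁ + y • α₂ + z • α₃
        = w' • (1:ℍ[ℚ,a,b]) + x' • α₁ + y' • α₂ + z' • α₃ →
      w = w' ∧ x = x' ∧ y = y' ∧ z = z' := by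
    intro w x y z w' x' y' z' h
    have h0 : ∑ i, (![w - w', x - x', y - y', z - z'] : Fin 4 → ℚ) i
        • ![(1:ℍ[ℚ,a,b]), α₁, α₂, α₃] i = 0 := by
      simp only [Fin.sum_univ_four, Matrix.cons_val_zero, Matrix.cons_val_one,
        Matrix.head_cons, Matrix.cons_val_two, Matrix.tail_cons, Matrix.cons_val_three]
      linear_combination (norm := module) h
    have hz := Fintype.linearIndependent_iff.mp hli _ h0
    refine ⟨?_, ?_, ?_, ?_⟩
    · have := hz 0; simp at this; linarith
    · have := hz 1; simp at this; linarith
    · have := hz 2; simp at this; linarith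
    · have := hz 3; simp at this; linarith
  -- membership in the ℤ-span, in coordinates
  have hmem : ∀ u : ℍ[ℚ,a,b],
      u ∈ Submodule.span ℤ ({1, α₁, α₂, α₃} : Set ℍ[ℚ,a,b]) ↔
      ∃ c : Fin 4 → ℤ, ((c 0 : ℚ)) • (1:ℍ[ℚ,a,b]) + (c 1 : ℚ) • α₁
        + (c 2 : ℚ) • α₂ + (c 3 : ℚ) • α₃ = u := by
    intro u
    rw [hB, Submodule.mem_span_range_iff_exists_fun]
    constructor
    · rintro ⟨c, rfl⟩
      exact ⟨c, by simp [Fin.sum_univ_four, Int.cast_smul_eq_zsmul]⟩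
    · rintro ⟨c, rfl⟩
      exact ⟨c, by simp [Fin.sum_univ_four, Int.cast_smul_eq_zsmul]⟩
  -- integer-cast multiplication as scalar action
  have hcm : ∀ (m : ℤ) (u : ℍ[ℚ,a,b]), ((m : ℤ) : ℍ[ℚ,a,b]) * u = (m : ℚ) • u := by
    intro m u
    rw [← QuaternionAlgebra.coe_mul_eq_smul]
    norm_cast
  have hc1 : ∀ m : ℤ, ((m : ℚ)) • (1:ℍ[ℚ,a,b]) = ((m : ℤ) : ℍ[ℚ,a,b]) := by
    intro m; rw [← hcm m 1, mul_one]
  have hs1 : ∀ q : ℚ, q • (1:ℍ[ℚ,a,b]) = (q : ℍ[ℚ,a,b]) := by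
    intro q
    rw [show (1:ℍ[ℚ,a,b]) = ((1:ℚ):ℍ[ℚ,a,b]) by norm_cast, QuaternionAlgebra.smul_coe, mul_one]
  have hcomb : ∀ m x y z : ℤ,
      ((m : ℤ) : ℍ[ℚ,a,b]) + (x : ℍ[ℚ,a,b]) * α₁ + (y : ℍ[ℚ,a,b]) * α₂ + (z : ℍ[ℚ,a,b]) * α₃
        = (m:ℚ) • (1:ℍ[ℚ,a,b]) + (x:ℚ) • α₁ + (y:ℚ) • α₂ + (z:ℚ) • α₃ := by
    intro m x y z
    rw [hcm, hcm, hcm, ← hc1]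
  -- parity from the square congruence
  have hpar : ∀ z c0 : ℤ, 4*c0 = 4*n - r^2 + z^2 → (2:ℤ) ∣ r - z := by
    intro z c0 h
    rcases Int.even_or_odd (r - z) with he|ho
    · exact he.two_dvd
    · exfalso
      have ho2 : Odd (r + z) := by
        have hrz : r + z = (r - z) + 2*z := by ring
        rw [hrz]; exact ho.add_even (even_two_mul z)
      have hodd : Odd ((r-z)*(r+z)) := ho.mul ho2
      have he2 : (r-z)*(r+z) = 2*(2*(n - c0)) := by linear_combination h
      rw [he2] at hodd
      exact (Int.not_odd_iff_even.mpr ⟨2*(n-c0), by ring⟩) hodd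
  -- the quadratic-form element in terms of the trace-zero part
  have hβγ : ∀ x y z : ℤ,
      ((x : ℍ[ℚ, a, b]) * (2 * α₁) + (y : ℍ[ℚ, a, b]) * (2 * α₂)
          + (z : ℍ[ℚ, a, b]) * (2 * α₃ - 1))
        = 2 * ((x : ℍ[ℚ,a,b]) * α₁ + (y : ℍ[ℚ,a,b]) * α₂ + (z : ℍ[ℚ,a,b]) * α₃)
            - (((z:ℚ)) : ℍ[ℚ,a,b]) := by
    intro x y z
    ext <;>
      simp [QuaternionAlgebra.re_ofNat, QuaternionAlgebra.imI_ofNat, QuaternionAlgebra.imJ_ofNat, QuaternionAlgebra.imK_ofNat, QuaternionAlgebra.re_mul, QuaternionAlgebra.imI_mul,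
        QuaternionAlgebra.imJ_mul, QuaternionAlgebra.imK_mul] <;> ring
  have hγtr : ∀ x y z : ℤ,
      ((x : ℍ[ℚ,a,b]) * α₁ + (y : ℍ[ℚ,a,b]) * α₂ + (z : ℍ[ℚ,a,b]) * α₃)
        + star ((x : ℍ[ℚ,a,b]) * α₁ + (y : ℍ[ℚ,a,b]) * α₂ + (z : ℍ[ℚ,a,b]) * α₃)
        = (((z:ℚ)) : ℍ[ℚ,a,b]) := by
    intro x y z
    ext <;>
      simp [QuaternionAlgebra.re_mul, QuaternionAlgebra.imI_mul,
        QuaternionAlgebra.imJ_mul, QuaternionAlgebra.imK_mul, hre₁, hre₂, hre₃] <;> ring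
  have hγmem : ∀ x y z : ℤ,
      ((x : ℍ[ℚ,a,b]) * α₁ + (y : ℍ[ℚ,a,b]) * α₂ + (z : ℍ[ℚ,a,b]) * α₃)
        ∈ Submodule.span ℤ ({1, α₁, α₂, α₃} : Set ℍ[ℚ,a,b]) := by
    intro x y z
    rw [hmem]
    exact ⟨![0, x, y, z], by simp [hcm]⟩
  -- Key step 1: parity of r - z for solutions of the quadratic form
  have hdvd : ∀ x y z : ℤ,
      ((x : ℍ[ℚ, a, b]) * (2 * α₁) + (y : ℍ[ℚ, a, b]) * (2 * α₂)
            + (z : ℍ[ℚ, a, b]) * (2 * α₃ - 1))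
          * star ((x : ℍ[ℚ, a, b]) * (2 * α₁) + (y : ℍ[ℚ, a, b]) * (2 * α₂)
            + (z : ℍ[ℚ, a, b]) * (2 * α₃ - 1))
          = ((4 * n - r ^ 2 : ℤ) : ℍ[ℚ, a, b]) → (2:ℤ) ∣ r - z := by
    intro x y z hv
    set γ : ℍ[ℚ,a,b] := (x : ℍ[ℚ,a,b]) * α₁ + (y : ℍ[ℚ,a,b]) * α₂ + (z : ℍ[ℚ,a,b]) * α₃
      with hγ
    rw [hβγ x y z, quat_aux, hγtr x y z] at hv
    have hX : (4:ℍ[ℚ,a,b]) * (γ * star γ)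
        = ((4 * n - r ^ 2 : ℤ) : ℍ[ℚ,a,b]) + ((2*(z:ℚ) : ℚ):ℍ[ℚ,a,b]) * (((z:ℚ)):ℍ[ℚ,a,b])
          - (((z:ℚ)^2 : ℚ):ℍ[ℚ,a,b]) := by
      rw [← hv]; abel
    have hXscal : ((4 * n - r ^ 2 : ℤ) : ℍ[ℚ,a,b])
          + ((2*(z:ℚ) : ℚ):ℍ[ℚ,a,b]) * (((z:ℚ)):ℍ[ℚ,a,b]) - (((z:ℚ)^2 : ℚ):ℍ[ℚ,a,b])
        = ((4*(n:ℚ) - (r:ℚ)^2 + (z:ℚ)^2 : ℚ) : ℍ[ℚ,a,b]) := by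
      simp only [quat_intCast, ← QuaternionAlgebra.coe_mul, ← QuaternionAlgebra.coe_sub,
        ← QuaternionAlgebra.coe_add]
      exact congrArg _ (by push_cast; ring)
    have hX2 : (4:ℚ) • (γ * star γ) = ((4*(n:ℚ) - (r:ℚ)^2 + (z:ℚ)^2 : ℚ) : ℍ[ℚ,a,b]) := by
      rw [← QuaternionAlgebra.coe_mul_eq_smul, ← h4c, hX, hXscal]
    have hXre : (4:ℚ) * (γ * star γ).re = 4*(n:ℚ) - (r:ℚ)^2 + (z:ℚ)^2 := by
      have h' := congrArg QuaternionAlgebra.re hX2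
      simp only [QuaternionAlgebra.re_smul, QuaternionAlgebra.re_coe, smul_eq_mul] at h'
      exact h'
    -- γ * star γ is an integer scalar
    have hsγ : star γ ∈ Submodule.span ℤ ({1, α₁, α₂, α₃} : Set ℍ[ℚ,a,b]) := by
      have hzz : (((z:ℚ)) : ℍ[ℚ,a,b]) = ((z : ℤ) : ℍ[ℚ,a,b]) := by norm_cast
      have hst : star γ = ((z : ℤ) : ℍ[ℚ,a,b]) - γ := by
        rw [← hzz, ← hγtr x y z, ← hγ]; abel
      rw [hst]
      refine Submodule.sub_mem _ ?_ (hγmem x y z)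
      rw [hmem]
      exact ⟨![z, 0, 0, 0], by simp [hc1]⟩
    have hnmem := hmul γ (hγmem x y z) (star γ) hsγ
    have hnscal : γ * star γ = (((γ * star γ).re : ℚ) : ℍ[ℚ,a,b]) :=
      QuaternionAlgebra.mul_star_eq_coe γ
    rw [hmem] at hnmem
    obtain ⟨c, hc⟩ := hnmem
    have hcombo : ((γ * star γ).re) • (1:ℍ[ℚ,a,b]) + (0:ℚ) • α₁ + (0:ℚ) • α₂ + (0:ℚ) • α₃
        = γ * star γ := by
      conv_rhs => rw [hnscal]
      rw [hs1]
      simp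
    obtain ⟨hq, -, -, -⟩ := huniq _ _ _ _ _ _ _ _ (hc.trans hcombo.symm)
    rw [← hq] at hXre
    have hir : (4:ℤ) * c 0 = 4*n - r^2 + z^2 := by exact_mod_cast hXre
    exact hpar z (c 0) hir
  -- Key step 2: lifted element satisfies the order conditions
  have hprop : ∀ x y z : ℤ, ∀ u : ℍ[ℚ,a,b],
      u = (((r - z)/2 : ℤ) : ℍ[ℚ,a,b]) + (x : ℍ[ℚ,a,b]) * α₁ + (y : ℍ[ℚ,a,b]) * α₂
          + (z : ℍ[ℚ,a,b]) * α₃ →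
      ((x : ℍ[ℚ, a, b]) * (2 * α₁) + (y : ℍ[ℚ, a, b]) * (2 * α₂)
            + (z : ℍ[ℚ, a, b]) * (2 * α₃ - 1))
          * star ((x : ℍ[ℚ, a, b]) * (2 * α₁) + (y : ℍ[ℚ, a, b]) * (2 * α₂)
            + (z : ℍ[ℚ, a, b]) * (2 * α₃ - 1))
          = ((4 * n - r ^ 2 : ℤ) : ℍ[ℚ, a, b]) →
      u ∈ Submodule.span ℤ ({1, α₁, α₂, α₃} : Set ℍ[ℚ,a,b]) ∧
        u + star u = ((r : ℤ) : ℍ[ℚ, a, b]) ∧ u * star u = ((n : ℤ) : ℍ[ℚ, a, b]) := by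
    intro x y z u hu hv
    have hd := hdvd x y z hv
    have hw2 : 2*((r - z)/2) = r - z := Int.mul_ediv_cancel' hd
    have hwq : 2*(((r - z)/2 : ℤ) : ℚ) = (r:ℚ) - (z:ℚ) := by exact_mod_cast hw2
    have htr : u + star u = ((r : ℤ) : ℍ[ℚ, a, b]) := by
      rw [hu]
      ext <;>
        simp [QuaternionAlgebra.re_mul, QuaternionAlgebra.imI_mul,
          QuaternionAlgebra.imJ_mul, QuaternionAlgebra.imK_mul, hre₁, hre₂, hre₃] <;>
        linarith [hwq]
    refine ⟨?_, htr, ?_⟩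
    · rw [hu, hmem]
      refine ⟨![(r - z)/2, x, y, z], ?_⟩
      simpa using (hcomb ((r - z)/2) x y z).symm
    · -- norm computation
      have hβu : 2*u - ((r:ℚ) : ℍ[ℚ,a,b])
          = 2 * ((x : ℍ[ℚ,a,b]) * α₁ + (y : ℍ[ℚ,a,b]) * α₂ + (z : ℍ[ℚ,a,b]) * α₃)
            - (((z:ℚ)) : ℍ[ℚ,a,b]) := by
        rw [hu]
        ext <;>
          simp [QuaternionAlgebra.re_ofNat, QuaternionAlgebra.imI_ofNat, QuaternionAlgebra.imJ_ofNat, QuaternionAlgebra.imK_ofNat, QuaternionAlgebra.re_mul, QuaternionAlgebra.imI_mul,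
            QuaternionAlgebra.imJ_mul, QuaternionAlgebra.imK_mul] <;>
          linarith [hwq]
      rw [hβγ x y z, ← hβu, quat_aux u (r:ℚ)] at hv
      have htru : u + star u = ((r:ℚ) : ℍ[ℚ,a,b]) := by rw [htr, hrc]
      rw [htru] at hv
      have hsc2 : ((4 * n - r ^ 2 : ℤ) : ℍ[ℚ,a,b])
            + ((2*(r:ℚ) : ℚ):ℍ[ℚ,a,b]) * (((r:ℚ)):ℍ[ℚ,a,b]) - (((r:ℚ)^2 : ℚ):ℍ[ℚ,a,b])
          = (4:ℍ[ℚ,a,b]) * ((n : ℤ) : ℍ[ℚ,a,b]) := by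
        rw [h4c]
        simp only [quat_intCast, ← QuaternionAlgebra.coe_mul, ← QuaternionAlgebra.coe_sub,
          ← QuaternionAlgebra.coe_add]
        exact congrArg _ (by push_cast; ring)
      have hfin : (4:ℍ[ℚ,a,b]) * (u * star u) = (4:ℍ[ℚ,a,b]) * ((n : ℤ) : ℍ[ℚ,a,b]) := by
        rw [← hsc2, ← hv]; abel
      have hfin2 : (4:ℚ) • (u * star u) = (4:ℚ) • (((n : ℤ) : ℍ[ℚ,a,b])) := by
        rw [← QuaternionAlgebra.coe_mul_eq_smul, ← QuaternionAlgebra.coe_mul_eq_smul, ← h4c]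
        exact hfin
      exact smul_right_injective _ (by norm_num : (4:ℚ) ≠ 0) hfin2
  -- assemble the bijection
  refine Nat.card_congr (Equiv.ofBijective
    (fun p => ⟨(((r - p.1.2.2)/2 : ℤ) : ℍ[ℚ,a,b]) + (p.1.1 : ℍ[ℚ,a,b]) * α₁
        + (p.1.2.1 : ℍ[ℚ,a,b]) * α₂ + (p.1.2.2 : ℍ[ℚ,a,b]) * α₃,
      hprop p.1.1 p.1.2.1 p.1.2.2 _ rfl p.2⟩) ⟨?_, ?_⟩)
  · -- injective
    rintro ⟨⟨x, y, z⟩, hp⟩ ⟨⟨x', y', z'⟩, hp'⟩ hEq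
    simp only [Subtype.mk.injEq] at hEq
    have h1 := (hcomb ((r - z)/2) x y z).symm.trans (hEq.trans (hcomb ((r - z')/2) x' y' z'))
    obtain ⟨-, hxx, hyy, hzz⟩ := huniq _ _ _ _ _ _ _ _ h1
    have hx : x = x' := by exact_mod_cast hxx
    have hy : y = y' := by exact_mod_cast hyy
    have hz : z = z' := by exact_mod_cast hzz
    apply Subtype.ext
    show (x, y, z) = (x', y', z')
    rw [hx, hy, hz]
  · -- surjective
    rintro ⟨α, hαmem, hαtr, hαnrm⟩
    rw [hmem] at hαmem
    obtain ⟨c, hc⟩ := hαmem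
    have hα : α = ((c 0 : ℤ) : ℍ[ℚ,a,b]) + ((c 1 : ℤ) : ℍ[ℚ,a,b]) * α₁
        + ((c 2 : ℤ) : ℍ[ℚ,a,b]) * α₂ + ((c 3 : ℤ) : ℍ[ℚ,a,b]) * α₃ := by
      rw [← hc, hcomb]
    -- trace relation in coordinates
    have htr2 : 2*(c 0) + c 3 = r := by
      have h' := congrArg QuaternionAlgebra.re hαtr
      simp only [QuaternionAlgebra.re_add, QuaternionAlgebra.re_star,
        QuaternionAlgebra.re_intCast] at h'
      have hαre := congrArg QuaternionAlgebra.re hα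
      simp [QuaternionAlgebra.re_mul, hre₁, hre₂, hre₃] at hαre
      have : 2*((c 0 : ℤ):ℚ) + ((c 3 : ℤ):ℚ) = ((r:ℤ):ℚ) := by
        rw [hαre] at h'
        push_cast at h' ⊢
        linarith
      exact_mod_cast this
    have htr2q : 2*((c 0 : ℤ):ℚ) + ((c 3 : ℤ):ℚ) = ((r:ℤ):ℚ) := by exact_mod_cast htr2
    -- the quadratic-form condition holds for the coordinates
    have hPv : ((c 1 : ℍ[ℚ, a, b]) * (2 * α₁) + (c 2 : ℍ[ℚ, a, b]) * (2 * α₂)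
          + (c 3 : ℍ[ℚ, a, b]) * (2 * α₃ - 1))
        * star ((c 1 : ℍ[ℚ, a, b]) * (2 * α₁) + (c 2 : ℍ[ℚ, a, b]) * (2 * α₂)
          + (c 3 : ℍ[ℚ, a, b]) * (2 * α₃ - 1))
        = ((4 * n - r ^ 2 : ℤ) : ℍ[ℚ, a, b]) := by
      rw [hβγ (c 1) (c 2) (c 3)]
      have hstep : 2 * ((c 1 : ℍ[ℚ,a,b]) * α₁ + (c 2 : ℍ[ℚ,a,b]) * α₂ + (c 3 : ℍ[ℚ,a,b]) * α₃)
          - (((c 3 : ℤ):ℚ) : ℍ[ℚ,a,b]) = 2*α - ((r:ℚ) : ℍ[ℚ,a,b]) := by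
        rw [hα]
        ext <;>
          simp [QuaternionAlgebra.re_ofNat, QuaternionAlgebra.imI_ofNat, QuaternionAlgebra.imJ_ofNat, QuaternionAlgebra.imK_ofNat, QuaternionAlgebra.re_mul, QuaternionAlgebra.imI_mul,
            QuaternionAlgebra.imJ_mul, QuaternionAlgebra.imK_mul] <;>
          linarith [htr2q]
      rw [hstep, quat_aux α (r:ℚ)]
      have htru : α + star α = ((r:ℚ) : ℍ[ℚ,a,b]) := by rw [hαtr, hrc]
      rw [htru, hαnrm, h4c]
      simp only [quat_intCast, ← QuaternionAlgebra.coe_mul, ← QuaternionAlgebra.coe_sub,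
        ← QuaternionAlgebra.coe_add]
      exact congrArg _ (by push_cast; ring)
    refine ⟨⟨(c 1, c 2, c 3), hPv⟩, ?_⟩
    apply Subtype.ext
    show (((r - c 3)/2 : ℤ) : ℍ[ℚ,a,b]) + ((c 1 : ℤ) : ℍ[ℚ,a,b]) * α₁
        + ((c 2 : ℤ) : ℍ[ℚ,a,b]) * α₂ + ((c 3 : ℤ) : ℍ[ℚ,a,b]) * α₃ = α
    have hwdiv : (r - c 3)/2 = c 0 := by omega
    rw [hwdiv, ← hα]
end
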